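/- arXiv:2509.16537 — 2 statements merged into one kernel-verified Lean document; each statement's English description precedes it below -/
import Mathlib

section
/- Suppose each G_j and each h_j is Lipschitz continuous, |h_j(x)| ≤ M and every component of G_j(x) is bounded by M in absolute value on 𝒳. Let θ^c ∈ Θ, r^c ∈ [0,1], λ₀ > 0, and suppose there exist constants γ > 0, p ≥ 1, γ' > 0, p' ≥ 1 such that for all λ ∈ (0, λ₀]: ψ_x^λ(τ) ≥ γ τ^p for all x ∈ 𝒳, τ ≥ 0 (lower-level growth functions taken at (θ^c, r^c) and at the perturbed parameters below), and ψ^λ_{θ^c,r^c}(τ) ≥ γ' τ^{p'} for all τ ≥ 0. Then for all sequences λ_k ↓ 0, θ̃_k ∈ Θ with ‖θ̃_k − θ^c‖_∞ → 0, and r̃_k ∈ [0,1] with r̃_k → r^c, one has 𝔻( 𝔛^{λ_k}(θ̃_k, r̃_k), 𝔛^{λ_k}(θ^c, r^c) ) → 0 as k → ∞. -/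
open Set Filter MeasureTheory
open scoped ENNReal

noncomputable section

/-- The probability simplex Θ in ℝⁿ. -/
def simplex (n : ℕ) : Set (Fin n → ℝ) := {θ | ∑ j, θ j = 1 ∧ ∀ j, 0 ≤ θ j}

/-- Ambiguity set `𝔹∞(c, r) ∩ Θ`.  (The norm on `Fin n → ℝ` is the sup norm.) -/
def amb {n : ℕ} (c : Fin n → ℝ) (r : ℝ) : Set (Fin n → ℝ) :=
  {θ | ‖θ - c‖ ≤ r} ∩ simplex n

/-- Regularized lower-level objective `∑_j θ_j h_j(x) − λ‖θ‖²` (Euclidean norm squared). -/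
def obj {n d : ℕ} (h : Fin n → (Fin d → ℝ) → ℝ) (lam : ℝ) (x : Fin d → ℝ)
    (θ : Fin n → ℝ) : ℝ :=
  (∑ j, θ j * h j x) - lam * ∑ j, (θ j) ^ 2

/-- Optimal value `ν^λ(x, c, r)` of the regularized lower-level problem. -/
def nuval {n d : ℕ} (h : Fin n → (Fin d → ℝ) → ℝ) (lam : ℝ) (x : Fin d → ℝ)
    (c : Fin n → ℝ) (r : ℝ) : ℝ :=
  sSup (obj h lam x '' amb c r)

/-- Maximizer set `ϑ^λ(x, c, r)` of the regularized lower-level problem. -/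
def argmaxSet {n d : ℕ} (h : Fin n → (Fin d → ℝ) → ℝ) (lam : ℝ) (x : Fin d → ℝ)
    (c : Fin n → ℝ) (r : ℝ) : Set (Fin n → ℝ) :=
  {θ ∈ amb c r | obj h lam x θ = nuval h lam x c r}

/-- Normal cone of `X` at `x` (standard inner product on ℝ^d). -/
def normalCone {d : ℕ} (X : Set (Fin d → ℝ)) (x : Fin d → ℝ) : Set (Fin d → ℝ) :=
  {v | ∀ y ∈ X, ∑ i, v i * (y i - x i) ≤ 0}

/-- x-solution set `𝔛^λ(c, r)` of the (regularized) Bayesian DRVI. -/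
def solSet {n d : ℕ} (G : Fin n → (Fin d → ℝ) → Fin d → ℝ)
    (h : Fin n → (Fin d → ℝ) → ℝ) (lam : ℝ) (X : Set (Fin d → ℝ))
    (c : Fin n → ℝ) (r : ℝ) : Set (Fin d → ℝ) :=
  {x ∈ X | ∃ θ ∈ argmaxSet h lam x c r,
      ∀ y ∈ X, 0 ≤ ∑ i, (∑ j, θ j * G j x i) * (y i - x i)}

/-- One-sided deviation `𝔻(S, T)` (the metric of the Pi type is the sup metric). -/
def dev {α : Type*} [PseudoMetricSpace α] (S T : Set α) : ℝ :=
  sSup ((fun s => Metric.infDist s T) '' S)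

/-- One-sided deviation with values in `ℝ≥0∞`. -/
def devE {α : Type*} [PseudoMetricSpace α] (S T : Set α) : ℝ≥0∞ :=
  ⨆ s ∈ S, ENNReal.ofReal (Metric.infDist s T)

/-- Lower-level growth function `ψ_x^λ` at parameters `(c, r)`
(values in `[0,∞]`; the infimum over the empty set is `⊤`). -/
def psiLow {n d : ℕ} (h : Fin n → (Fin d → ℝ) → ℝ) (lam : ℝ) (x : Fin d → ℝ)
    (c : Fin n → ℝ) (r : ℝ) (τ : ℝ) : ℝ≥0∞ :=
  ⨅ θ ∈ {θ ∈ amb c r | τ ≤ Metric.infDist θ (argmaxSet h lam x c r)},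
    ENNReal.ofReal (nuval h lam x c r - obj h lam x θ)

/-- Generalized inverse `(ψ_x^λ)⁻¹(t) = sup{τ ≥ 0 : ψ_x^λ(τ) ≤ t}`. -/
def psiLowInv {n d : ℕ} (h : Fin n → (Fin d → ℝ) → ℝ) (lam : ℝ) (x : Fin d → ℝ)
    (c : Fin n → ℝ) (r : ℝ) (t : ℝ) : ℝ≥0∞ :=
  ⨆ τ ∈ {τ : ℝ | 0 ≤ τ ∧ psiLow h lam x c r τ ≤ ENNReal.ofReal t}, ENNReal.ofReal τ

/-- `Ψ_x^λ(η) = η + (ψ_x^λ)⁻¹(2η)`. -/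
def PsiLow {n d : ℕ} (h : Fin n → (Fin d → ℝ) → ℝ) (lam : ℝ) (x : Fin d → ℝ)
    (c : Fin n → ℝ) (r : ℝ) (η : ℝ) : ℝ≥0∞ :=
  ENNReal.ofReal η + psiLowInv h lam x c r (2 * η)

/-- Residual `d(0, ∑_j θ_j G_j(x) + N_X(x))` (ℓ∞ distance). -/
def resid {n d : ℕ} (G : Fin n → (Fin d → ℝ) → Fin d → ℝ) (X : Set (Fin d → ℝ))
    (x : Fin d → ℝ) (θ : Fin n → ℝ) : ℝ :=
  Metric.infDist (0 : Fin d → ℝ)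
    ((fun w => (fun i => ∑ j, θ j * G j x i) + w) '' normalCone X x)

/-- Solution-set growth function `ψ^λ_{c,r}` (values in `[0,∞]`). -/
def psiSol {n d : ℕ} (G : Fin n → (Fin d → ℝ) → Fin d → ℝ)
    (h : Fin n → (Fin d → ℝ) → ℝ) (lam : ℝ) (X : Set (Fin d → ℝ))
    (c : Fin n → ℝ) (r : ℝ) (τ : ℝ) : ℝ≥0∞ :=
  ⨅ x ∈ {x ∈ X | τ ≤ Metric.infDist x (solSet G h lam X c r)},
    ⨅ θ ∈ argmaxSet h lam x c r, ENNReal.ofReal (resid G X x θ)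

/-- Generalized inverse `(ψ^λ_{c,r})⁻¹(t) = sup{τ ≥ 0 : ψ^λ_{c,r}(τ) ≤ t}`. -/
def psiSolInv {n d : ℕ} (G : Fin n → (Fin d → ℝ) → Fin d → ℝ)
    (h : Fin n → (Fin d → ℝ) → ℝ) (lam : ℝ) (X : Set (Fin d → ℝ))
    (c : Fin n → ℝ) (r : ℝ) (t : ℝ) : ℝ≥0∞ :=
  ⨆ τ ∈ {τ : ℝ | 0 ≤ τ ∧ psiSol G h lam X c r τ ≤ ENNReal.ofReal t}, ENNReal.ofReal τ

section auxlemmas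
variable {n d : ℕ}

lemma simplex_eq_std : simplex n = stdSimplex ℝ (Fin n) := by
  ext θ; simp [simplex, stdSimplex, and_comm]

lemma simplex_convex : Convex ℝ (simplex n) := by
  rw [simplex_eq_std]; exact convex_stdSimplex ℝ _

lemma simplex_compact : IsCompact (simplex n) := by
  rw [simplex_eq_std]; exact isCompact_stdSimplex _ _

lemma mem_simplex_le_one {θ : Fin n → ℝ} (hθ : θ ∈ simplex n) (j : Fin n) : θ j ≤ 1 := by
  rw [← hθ.1]
  exact Finset.single_le_sum (fun i _ => hθ.2 i) (Finset.mem_univ j)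

lemma amb_compact (c : Fin n → ℝ) (r : ℝ) : IsCompact (amb c r) :=
  simplex_compact.inter_left (isClosed_le (by continuity) continuous_const)

lemma self_mem_amb {c : Fin n → ℝ} {r : ℝ} (hc : c ∈ simplex n) (hr : 0 ≤ r) :
    c ∈ amb c r := ⟨by simp [hr], hc⟩

lemma norm_coord {θ η : Fin n → ℝ} (j : Fin n) : |θ j - η j| ≤ ‖θ - η‖ := by
  simpa using norm_le_pi_norm (θ - η) j

lemma proj_amb {c1 c2 : Fin n → ℝ} {r1 r2 : ℝ} (hc2 : c2 ∈ simplex n) (hr2 : 0 ≤ r2)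
    {θ : Fin n → ℝ} (hθ : θ ∈ amb c1 r1) :
    ∃ θ' ∈ amb c2 r2, ‖θ' - θ‖ ≤ ‖c1 - c2‖ + |r1 - r2| := by
  have hbound : ‖θ - c2‖ ≤ r1 + ‖c1 - c2‖ := by
    calc ‖θ - c2‖ ≤ ‖θ - c1‖ + ‖c1 - c2‖ := norm_sub_le_norm_sub_add_norm_sub _ _ _
      _ ≤ r1 + ‖c1 - c2‖ := by
          have := hθ.1; simp only [Set.mem_setOf_eq] at this; linarith
  have hRHS : 0 ≤ ‖c1 - c2‖ + |r1 - r2| := by positivity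
  by_cases hcase : ‖θ - c2‖ ≤ r2
  · exact ⟨θ, ⟨hcase, hθ.2⟩, by simpa using hRHS⟩
  push_neg at hcase
  set s := ‖θ - c2‖ with hs
  have hspos : 0 < s := lt_of_le_of_lt hr2 hcase
  set t := r2 / s with ht
  have ht0 : 0 ≤ t := div_nonneg hr2 hspos.le
  have ht1 : t ≤ 1 := by rw [div_le_one hspos]; exact hcase.le
  refine ⟨c2 + t • (θ - c2), ⟨?_, ?_⟩, ?_⟩
  · show ‖c2 + t • (θ - c2) - c2‖ ≤ r2
    have : c2 + t • (θ - c2) - c2 = t • (θ - c2) := by abel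
    rw [this, norm_smul, Real.norm_eq_abs, abs_of_nonneg ht0]
    rw [ht, div_mul_cancel₀ _ hspos.ne']
  · have heq : c2 + t • (θ - c2) = (1 - t) • c2 + t • θ := by module
    rw [heq]
    exact simplex_convex hc2 hθ.2 (by linarith) ht0 (by ring)
  · have heq : c2 + t • (θ - c2) - θ = (t - 1) • (θ - c2) := by module
    rw [heq, norm_smul, Real.norm_eq_abs, abs_of_nonpos (by linarith)]
    have h2 : (-(t - 1)) * s = s - r2 := by
      have hts : t * s = r2 := by rw [ht, div_mul_cancel₀ _ hspos.ne']
      linear_combination -hts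
    rw [h2]
    have : r1 - r2 ≤ |r1 - r2| := le_abs_self _
    linarith

lemma obj_cont (h : Fin n → (Fin d → ℝ) → ℝ) (lam : ℝ) (x : Fin d → ℝ) :
    Continuous (obj h lam x) := by
  unfold obj; fun_prop

lemma obj_lip {h : Fin n → (Fin d → ℝ) → ℝ} {lam lam0 : ℝ} {x : Fin d → ℝ} {M : ℝ}
    (hM' : ∀ j, |h j x| ≤ M) (hlam : |lam| ≤ lam0)
    {θ1 θ2 : Fin n → ℝ} (h1 : θ1 ∈ simplex n) (h2 : θ2 ∈ simplex n) :
    obj h lam x θ1 - obj h lam x θ2 ≤ (n * (M + 2 * lam0)) * ‖θ1 - θ2‖ := by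
  set D := ‖θ1 - θ2‖ with hD
  have hD0 : 0 ≤ D := norm_nonneg _
  have hM0 : 0 ≤ M := le_trans (abs_nonneg _) (hM' ⟨0, by
    rcases Nat.eq_zero_or_pos n with h0 | h0
    · subst h0; exact absurd h1.1 (by simp)
    · exact h0⟩)
  have e1 : ∑ j, (θ1 j - θ2 j) * h j x ≤ n * (D * M) := by
    calc ∑ j, (θ1 j - θ2 j) * h j x ≤ ∑ _j : Fin n, D * M := by
          refine Finset.sum_le_sum fun j _ => ?_
          calc (θ1 j - θ2 j) * h j x ≤ |(θ1 j - θ2 j) * h j x| := le_abs_self _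
            _ = |θ1 j - θ2 j| * |h j x| := abs_mul _ _
            _ ≤ D * M := mul_le_mul (norm_coord j) (hM' j) (abs_nonneg _) hD0
      _ = n * (D * M) := by simp [Finset.sum_const, mul_comm]
  have e2 : |∑ j, ((θ1 j) ^ 2 - (θ2 j) ^ 2)| ≤ n * (2 * D) := by
    calc |∑ j, ((θ1 j) ^ 2 - (θ2 j) ^ 2)| ≤ ∑ j, |(θ1 j) ^ 2 - (θ2 j) ^ 2| :=
          Finset.abs_sum_le_sum_abs _ _
      _ ≤ ∑ _j : Fin n, 2 * D := by
          refine Finset.sum_le_sum fun j _ => ?_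
          have hj := abs_le.mp (norm_coord (θ := θ1) (η := θ2) j)
          have a1 := h1.2 j; have a2 := h2.2 j
          have b1 := mem_simplex_le_one h1 j; have b2 := mem_simplex_le_one h2 j
          rw [abs_le]; constructor <;> nlinarith [hj.1, hj.2]
      _ = n * (2 * D) := by simp [Finset.sum_const, mul_comm]
  have e3 : -(lam * (∑ j, (θ1 j) ^ 2 - ∑ j, (θ2 j) ^ 2)) ≤ lam0 * (n * (2 * D)) := by
    have hss : ∑ j, (θ1 j) ^ 2 - ∑ j, (θ2 j) ^ 2 = ∑ j, ((θ1 j) ^ 2 - (θ2 j) ^ 2) := by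
      rw [Finset.sum_sub_distrib]
    rw [hss]
    calc -(lam * ∑ j, ((θ1 j) ^ 2 - (θ2 j) ^ 2)) ≤ |lam * ∑ j, ((θ1 j) ^ 2 - (θ2 j) ^ 2)| :=
          neg_le_abs _
      _ = |lam| * |∑ j, ((θ1 j) ^ 2 - (θ2 j) ^ 2)| := abs_mul _ _
      _ ≤ lam0 * (n * (2 * D)) := mul_le_mul hlam e2 (abs_nonneg _) (le_trans (abs_nonneg _) hlam)
  have e0 : ∑ j, θ1 j * h j x - ∑ j, θ2 j * h j x = ∑ j, (θ1 j - θ2 j) * h j x := by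
    rw [← Finset.sum_sub_distrib]
    exact Finset.sum_congr rfl fun j _ => by ring
  unfold obj
  have expand : (∑ j, θ1 j * h j x - lam * ∑ j, (θ1 j) ^ 2) -
      (∑ j, θ2 j * h j x - lam * ∑ j, (θ2 j) ^ 2) =
      (∑ j, (θ1 j - θ2 j) * h j x) + (-(lam * (∑ j, (θ1 j) ^ 2 - ∑ j, (θ2 j) ^ 2))) := by
    rw [← e0]; ring
  rw [expand]
  nlinarith [e1, e3]

lemma argmax_spec (h : Fin n → (Fin d → ℝ) → ℝ) (lam : ℝ) (x : Fin d → ℝ)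
    {c : Fin n → ℝ} {r : ℝ} (hc : c ∈ simplex n) (hr : 0 ≤ r) :
    (argmaxSet h lam x c r).Nonempty ∧
      ∀ θ ∈ amb c r, obj h lam x θ ≤ nuval h lam x c r := by
  have hne : (amb c r).Nonempty := ⟨c, self_mem_amb hc hr⟩
  obtain ⟨θs, hθs, hmax⟩ := (amb_compact c r).exists_isMaxOn hne (obj_cont h lam x).continuousOn
  have hbdd : BddAbove (obj h lam x '' amb c r) :=
    ⟨obj h lam x θs, by rintro b ⟨θ, hθ, rfl⟩; exact hmax hθ⟩
  have hval : nuval h lam x c r = obj h lam x θs := by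
    refine le_antisymm (csSup_le (hne.image _) ?_) (le_csSup hbdd (mem_image_of_mem _ hθs))
    rintro b ⟨θ, hθ, rfl⟩; exact hmax hθ
  exact ⟨⟨θs, hθs, hval.symm⟩, fun θ hθ => hval ▸ hmax hθ⟩

lemma argmax_compact (h : Fin n → (Fin d → ℝ) → ℝ) (lam : ℝ) (x : Fin d → ℝ)
    (c : Fin n → ℝ) (r : ℝ) : IsCompact (argmaxSet h lam x c r) := by
  have heq : argmaxSet h lam x c r =
      amb c r ∩ {θ | obj h lam x θ = nuval h lam x c r} := rfl
  rw [heq]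
  exact (amb_compact c r).inter_right (isClosed_eq (obj_cont h lam x) continuous_const)

lemma nuval_comp {h : Fin n → (Fin d → ℝ) → ℝ} {lam lam0 : ℝ} {x : Fin d → ℝ} {M : ℝ}
    (hM' : ∀ j, |h j x| ≤ M) (hlam : |lam| ≤ lam0)
    (hL0 : 0 ≤ (n : ℝ) * (M + 2 * lam0))
    {c1 c2 : Fin n → ℝ} {r1 r2 : ℝ} (hc1 : c1 ∈ simplex n) (hc2 : c2 ∈ simplex n)
    (hr1 : 0 ≤ r1) (hr2 : 0 ≤ r2) :
    nuval h lam x c1 r1 ≤ nuval h lam x c2 r2 +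
      ((n : ℝ) * (M + 2 * lam0)) * (‖c1 - c2‖ + |r1 - r2|) := by
  have hne : (amb c1 r1).Nonempty := ⟨c1, self_mem_amb hc1 hr1⟩
  refine csSup_le (hne.image _) ?_
  rintro b ⟨θ, hθ, rfl⟩
  obtain ⟨θ', hθ', hnear⟩ := proj_amb hc2 hr2 hθ
  have h1 := obj_lip hM' hlam hθ.2 hθ'.2
  have h2 := (argmax_spec h lam x hc2 hr2).2 θ' hθ'
  have h3 : ‖θ - θ'‖ = ‖θ' - θ‖ := norm_sub_rev _ _
  have h4 : ((n : ℝ) * (M + 2 * lam0)) * ‖θ' - θ‖ ≤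
      ((n : ℝ) * (M + 2 * lam0)) * (‖c1 - c2‖ + |r1 - r2|) :=
    mul_le_mul_of_nonneg_left hnear hL0
  rw [h3] at h1
  linarith

lemma resid_le_aux {G : Fin n → (Fin d → ℝ) → Fin d → ℝ} {X : Set (Fin d → ℝ)}
    {x : Fin d → ℝ} {θ θ' : Fin n → ℝ} {M : ℝ} (hM0 : 0 ≤ M)
    (hMG : ∀ j i, |G j x i| ≤ M)
    (hv : (fun i => -∑ j, θ' j * G j x i) ∈ normalCone X x) :
    resid G X x θ ≤ (n : ℝ) * M * ‖θ - θ'‖ := by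
  set w : Fin d → ℝ := fun i => -∑ j, θ' j * G j x i with hw
  have hq : ((fun i => ∑ j, θ j * G j x i) + w) ∈
      (fun w => (fun i => ∑ j, θ j * G j x i) + w) '' normalCone X x :=
    mem_image_of_mem _ hv
  refine le_trans (Metric.infDist_le_dist_of_mem hq) ?_
  rw [dist_eq_norm, zero_sub, norm_neg]
  refine (pi_norm_le_iff_of_nonneg (by positivity)).mpr fun i => ?_
  have hcoord : ((fun i => ∑ j, θ j * G j x i) + w) i = ∑ j, (θ j - θ' j) * G j x i := by
    show (∑ j, θ j * G j x i) + (-∑ j, θ' j * G j x i) = _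
    rw [← sub_eq_add_neg, ← Finset.sum_sub_distrib]
    exact Finset.sum_congr rfl fun j _ => by ring
  rw [hcoord, Real.norm_eq_abs]
  calc |∑ j, (θ j - θ' j) * G j x i| ≤ ∑ j, |(θ j - θ' j) * G j x i| :=
        Finset.abs_sum_le_sum_abs _ _
    _ ≤ ∑ _j : Fin n, ‖θ - θ'‖ * M := by
        refine Finset.sum_le_sum fun j _ => ?_
        rw [abs_mul]
        exact mul_le_mul (norm_coord j) (hMG j i) (abs_nonneg _) (norm_nonneg _)
    _ = (n : ℝ) * M * ‖θ - θ'‖ := by simp [Finset.sum_const]; ring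
end auxlemmas
set_option maxHeartbeats 1000000 in
/-- Theorem 4.10 (deterministic form): the deviation of the contaminated regularized
solution set from the true regularized solution set vanishes as the contamination,
estimation error and regularization parameter vanish. -/
theorem contaminated_solSet_convergence {n d : ℕ} (hn : 1 ≤ n) (hd : 1 ≤ d)
    (X : Set (Fin d → ℝ)) (hXne : X.Nonempty) (hXcomp : IsCompact X) (hXconv : Convex ℝ X)
    (G : Fin n → (Fin d → ℝ) → Fin d → ℝ) (h : Fin n → (Fin d → ℝ) → ℝ)
    (hGLip : ∀ j, ∃ LG : ℝ, ∀ x ∈ X, ∀ y ∈ X, ‖G j x - G j y‖ ≤ LG * ‖x - y‖)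
    (hhLip : ∀ j, ∃ Lh : ℝ, ∀ x ∈ X, ∀ y ∈ X, |h j x - h j y| ≤ Lh * ‖x - y‖)
    (M : ℝ) (hM : ∀ j, ∀ x ∈ X, |h j x| ≤ M) (hMG : ∀ j, ∀ x ∈ X, ∀ i, |G j x i| ≤ M)
    (θc : Fin n → ℝ) (hθc : θc ∈ simplex n) (rc : ℝ) (hrc : rc ∈ Set.Icc (0 : ℝ) 1)
    (lam0 : ℝ) (hlam0 : 0 < lam0)
    (p γ p' γ' : ℝ) (hp : 1 ≤ p) (hγ : 0 < γ) (hp' : 1 ≤ p') (hγ' : 0 < γ')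
    (hgrowc : ∀ lam : ℝ, lam ∈ Set.Ioc 0 lam0 → ∀ x ∈ X, ∀ τ : ℝ, 0 ≤ τ →
      ENNReal.ofReal (γ * τ ^ p) ≤ psiLow h lam x θc rc τ)
    (hgrowSol : ∀ lam : ℝ, lam ∈ Set.Ioc 0 lam0 → ∀ τ : ℝ, 0 ≤ τ →
      ENNReal.ofReal (γ' * τ ^ p') ≤ psiSol G h lam X θc rc τ) :
    ∀ (lamk : ℕ → ℝ) (θk : ℕ → Fin n → ℝ) (rk : ℕ → ℝ),
      (∀ k, lamk k ∈ Set.Ioc 0 lam0) → Tendsto lamk atTop (nhds 0) →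
      (∀ k, θk k ∈ simplex n) → Tendsto (fun k => ‖θk k - θc‖) atTop (nhds 0) →
      (∀ k, rk k ∈ Set.Icc (0 : ℝ) 1) → Tendsto rk atTop (nhds rc) →
      (∀ k, ∀ x ∈ X, ∀ τ : ℝ, 0 ≤ τ →
        ENNReal.ofReal (γ * τ ^ p) ≤ psiLow h (lamk k) x (θk k) (rk k) τ) →
      ∀ ε : ℝ, 0 < ε → ∃ K : ℕ, ∀ k ≥ K,
        ∀ x ∈ solSet G h (lamk k) X (θk k) (rk k),
          Metric.infDist x (solSet G h (lamk k) X θc rc) ≤ ε := by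
  intro lamk θk rk hlamk _hlamconv hθk hθconv hrk hrconv _hgrowk ε hε
  classical
  obtain ⟨x0, hx0⟩ := hXne
  have hMnn : 0 ≤ M := le_trans (abs_nonneg _) (hM ⟨0, hn⟩ x0 hx0)
  obtain ⟨L, hLdef⟩ : ∃ L : ℝ, L = (n : ℝ) * (M + 2 * lam0) := ⟨_, rfl⟩
  have hL0 : 0 ≤ L := by rw [hLdef]; positivity
  obtain ⟨B, hBdef⟩ : ∃ B : ℝ, B = (n : ℝ) * M + 1 := ⟨_, rfl⟩
  have hB : 0 < B := by rw [hBdef]; positivity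
  obtain ⟨A, hAdef⟩ : ∃ A : ℝ, A = γ' * ε ^ p' := ⟨_, rfl⟩
  have hA : 0 < A := by rw [hAdef]; exact mul_pos hγ' (Real.rpow_pos_of_pos hε _)
  obtain ⟨τ0, hτ0def⟩ : ∃ t : ℝ, t = A / (2 * B) := ⟨_, rfl⟩
  have hτ0 : 0 < τ0 := by rw [hτ0def]; exact div_pos hA (by linarith)
  have hP : 0 < γ * τ0 ^ p := mul_pos hγ (Real.rpow_pos_of_pos hτ0 _)
  obtain ⟨e0, he0def⟩ : ∃ e0 : ℝ, e0 = min (A / (4 * B)) (γ * τ0 ^ p / (2 * (L + 1))) := ⟨_, rfl⟩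
  have he0 : 0 < e0 := by
    rw [he0def]
    exact lt_min (div_pos hA (by linarith)) (div_pos hP (by linarith))
  have htendr : Tendsto (fun k => |rk k - rc|) atTop (nhds 0) := by
    have := (hrconv.sub_const rc).abs
    simpa using this
  have htend : Tendsto (fun k => ‖θk k - θc‖ + |rk k - rc|) atTop (nhds 0) := by
    simpa using hθconv.add htendr
  have hev : ∀ᶠ k in atTop, ‖θk k - θc‖ + |rk k - rc| < e0 :=
    htend.eventually (gt_mem_nhds he0)
  obtain ⟨K, hK⟩ := eventually_atTop.mp hev
  refine ⟨K, fun k hk x hx => ?_⟩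
  set lam := lamk k with hlamdef
  have hlam : |lam| ≤ lam0 := by
    rw [abs_of_pos (hlamk k).1]; exact (hlamk k).2
  have hee0 : ‖θk k - θc‖ + |rk k - rc| < e0 := hK k hk
  have he_nn : 0 ≤ ‖θk k - θc‖ + |rk k - rc| := by positivity
  obtain ⟨hxX, θt, hθtArg, hVI⟩ := hx
  have hθtamb : θt ∈ amb (θk k) (rk k) := hθtArg.1
  have hθtval : obj h lam x θt = nuval h lam x (θk k) (rk k) := hθtArg.2
  obtain ⟨θ', hθ'amb, hθ'near⟩ := proj_amb hθc hrc.1 hθtamb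
  have hMx : ∀ j, |h j x| ≤ M := fun j => hM j x hxX
  have hν1 : nuval h lam x θc rc ≤ nuval h lam x (θk k) (rk k)
      + L * (‖θk k - θc‖ + |rk k - rc|) := by
    have hL0' : 0 ≤ (n : ℝ) * (M + 2 * lam0) := by positivity
    have h0 := nuval_comp (h := h) hMx hlam hL0' hθc (hθk k) hrc.1 (hrk k).1
    rw [norm_sub_rev, abs_sub_comm, ← hLdef] at h0
    exact h0
  have hobjθ' : obj h lam x θt - obj h lam x θ' ≤ L * (‖θk k - θc‖ + |rk k - rc|) := by
    have h0 := obj_lip hMx hlam hθtamb.2 hθ'amb.2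
    rw [norm_sub_rev, ← hLdef] at h0
    exact le_trans h0 (mul_le_mul_of_nonneg_left hθ'near hL0)
  have hle : obj h lam x θ' ≤ nuval h lam x θc rc :=
    (argmax_spec h lam x hθc hrc.1).2 θ' hθ'amb
  have hgap : nuval h lam x θc rc - obj h lam x θ'
      ≤ 2 * (L * (‖θk k - θc‖ + |rk k - rc|)) := by linarith
  set τ : ℝ := Metric.infDist θ' (argmaxSet h lam x θc rc) with hτdef
  have hτnn : 0 ≤ τ := Metric.infDist_nonneg
  have hψ : psiLow h lam x θc rc τ
      ≤ ENNReal.ofReal (nuval h lam x θc rc - obj h lam x θ') := by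
    refine iInf₂_le θ' ⟨hθ'amb, le_rfl⟩
  have hγτ : γ * τ ^ p ≤ 2 * (L * (‖θk k - θc‖ + |rk k - rc|)) := by
    have h1 := le_trans (hgrowc lam (hlamk k) x hxX τ hτnn) hψ
    have h2 := (ENNReal.ofReal_le_ofReal_iff (by linarith)).mp h1
    linarith
  have hτlt : τ < τ0 := by
    by_contra hcon
    push_neg at hcon
    have hpow : τ0 ^ p ≤ τ ^ p := Real.rpow_le_rpow hτ0.le hcon (by linarith)
    have he0le : e0 ≤ γ * τ0 ^ p / (2 * (L + 1)) := he0def ▸ min_le_right _ _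
    have k1 : e0 * (2 * (L + 1)) ≤ γ * τ0 ^ p := (le_div_iff₀ (by positivity)).mp he0le
    nlinarith [mul_le_mul_of_nonneg_left hpow hγ.le,
      mul_le_mul_of_nonneg_left hee0.le (by positivity : (0:ℝ) ≤ 2 * L)]
  obtain ⟨hargne, -⟩ := argmax_spec h lam x hθc hrc.1
  obtain ⟨θs, hθs, hdist⟩ :=
    (argmax_compact h lam x θc rc).exists_infDist_eq_dist hargne θ'
  have hnc : (fun i => -∑ j, θt j * G j x i) ∈ normalCone X x := by
    intro y hy
    have h1 := hVI y hy
    have h2 : ∑ i, (-∑ j, θt j * G j x i) * (y i - x i)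
        = -∑ i, (∑ j, θt j * G j x i) * (y i - x i) := by
      rw [← Finset.sum_neg_distrib]
      exact Finset.sum_congr rfl fun i _ => by ring
    rw [h2]; linarith
  have hres : resid G X x θs ≤ (n : ℝ) * M * ‖θs - θt‖ :=
    resid_le_aux hMnn (fun j i => hMG j x hxX i) hnc
  have hnorm : ‖θs - θt‖ ≤ τ + (‖θk k - θc‖ + |rk k - rc|) := by
    calc ‖θs - θt‖ ≤ ‖θs - θ'‖ + ‖θ' - θt‖ := norm_sub_le_norm_sub_add_norm_sub _ _ _
      _ ≤ τ + (‖θk k - θc‖ + |rk k - rc|) := by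
          have h1 : ‖θs - θ'‖ = dist θ' θs := by rw [dist_eq_norm', norm_sub_rev]
          rw [h1, ← hdist]
          exact add_le_add le_rfl hθ'near
  have hresA : resid G X x θs < A := by
    have he0A : e0 ≤ A / (4 * B) := he0def ▸ min_le_left _ _
    have hnMB : (n : ℝ) * M ≤ B := by rw [hBdef]; linarith
    have k1 : B * τ0 = A / 2 := by rw [hτ0def]; field_simp
    have k2 : B * e0 ≤ A / 4 := by
      calc B * e0 ≤ B * (A / (4 * B)) := mul_le_mul_of_nonneg_left he0A hB.le
        _ = A / 4 := by field_simp
    have nn1 : (0:ℝ) ≤ (n:ℝ) * M := by positivity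
    have nn2 : (0:ℝ) ≤ τ + (‖θk k - θc‖ + |rk k - rc|) := by linarith
    have i1 := mul_le_mul_of_nonneg_left hnorm nn1
    have i2 := mul_le_mul_of_nonneg_right hnMB nn2
    have i3 := mul_lt_mul_of_pos_left hτlt hB
    have i4 := mul_lt_mul_of_pos_left hee0 hB
    linarith [hres, i1, i2, i3, i4, k1, k2, hA]
  by_contra hcon
  push_neg at hcon
  have hmemx : x ∈ {x ∈ X | ε ≤ Metric.infDist x (solSet G h lam X θc rc)} :=
    ⟨hxX, hcon.le⟩
  have hψs : psiSol G h lam X θc rc ε ≤ ENNReal.ofReal (resid G X x θs) :=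
    le_trans (iInf₂_le x hmemx) (iInf₂_le θs hθs)
  have h1 := le_trans (hgrowSol lam (hlamk k) ε hε.le) hψs
  have h2 := (ENNReal.ofReal_le_ofReal_iff Metric.infDist_nonneg).mp h1
  exact absurd h2 (not_le.mpr (hAdef ▸ hresA))
end
end

section
/- Let d ≥ 1, n ≥ 1, λ > 0, κ > 0, β ∈ [0,1), and let Q_1,…,Q_n be Borel probability measures on ℝ^d such that for each j: (i) for every x in 𝒳 := {x ∈ ℝ^d : x_m ≥ 0 for all m, ∑_m x_m ≤ 1}, one has xᵀξ ≥ −β for Q_j-almost every ξ; and (ii) ∫ ‖ξ‖² dQ_j(ξ) ≤ σ̄_j² < ∞. Let Θ̂ be a nonempty compact convex subset of the probability simplex Θ ⊆ ℝ^n. Define φ^n(x) := ( ∫ −log(1 + xᵀξ) dQ_1(ξ), …, ∫ −log(1 + xᵀξ) dQ_n(ξ) ) ∈ ℝ^n, θ*(x) := Proj_{Θ̂}( φ^n(x)/(2λ) ) (Euclidean metric projection onto Θ̂), and for x = (x¹, x²) ∈ 𝒳 × 𝒳 define F(x) := (F_1(x), F_2(x)) with F_i(x) := ∑_{j=1}^n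 θ*_j(x^i) ∫ ( −ξ/(1 + (x^i)ᵀξ) ) dQ_j(ξ) + κ (x^i − x^{−i}), where −ξ/(1 + xᵀξ) is the gradient in x of −log(1 + xᵀξ). Then F is monotone on 𝒳 × 𝒳 (i.e., ⟨F(x) − F(y), x − y⟩ ≥ 0 for all x, y ∈ 𝒳 × 𝒳) and Lipschitz continuous on 𝒳 × 𝒳 with modulus L_F = (√2 + √2/(2λ)) · n · (max_j σ̄_j²)/(1 − β)² + 2√2 κ. -/
open MeasureTheory

noncomputable section

/-- The feasible portfolio set 𝒳 = {x ∈ ℝ^d : x ≥ 0, ∑ x_m ≤ 1}. -/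
def portfolioSet (d : ℕ) : Set (Fin d → ℝ) := {x | (∀ m, 0 ≤ x m) ∧ ∑ m, x m ≤ 1}


namespace P51
lemma le_sqrt_mul_sqrt_of_forall {A B C : ℝ} (hA : 0 ≤ A) (hB : 0 ≤ B)
    (h : ∀ s : ℝ, 0 < s → C ≤ (s * A + B / s) / 2) :
    C ≤ Real.sqrt A * Real.sqrt B := by
  have key : ∀ A B : ℝ, 0 = A → 0 ≤ B →
      (∀ s : ℝ, 0 < s → C ≤ (s * A + B / s) / 2) → C ≤ 0 := by
    intro A B hA0 hB h
    have hε : ∀ ε : ℝ, 0 < ε → C ≤ ε := by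
      intro ε hε
      have h2 := h (B / ε + 1) (by positivity)
      rw [← hA0] at h2
      have hmul : ε * (B / ε) = B := by field_simp
      have hb : B / (B / ε + 1) ≤ ε := by
        rw [div_le_iff₀ (by positivity)]
        nlinarith [div_nonneg hB hε.le]
      calc C ≤ ((B / ε + 1) * 0 + B / (B / ε + 1)) / 2 := h2
        _ ≤ ε := by linarith
    by_contra hcon
    push_neg at hcon
    linarith [hε (C / 2) (by linarith)]
  rcases eq_or_lt_of_le hA with hA0 | hA
  · have := key A B hA0 hB h
    calc C ≤ 0 := this
      _ ≤ _ := by positivity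
  rcases eq_or_lt_of_le hB with hB0 | hB
  · have := key B A hB0 hA.le (fun s hs => by
      have h2 := h (1 / s) (by positivity)
      calc C ≤ (1 / s * A + B / (1 / s)) / 2 := h2
        _ = (s * B + A / s) / 2 := by field_simp; ring)
    calc C ≤ 0 := this
      _ ≤ _ := by positivity
  · have h := h (Real.sqrt B / Real.sqrt A)
      (div_pos (Real.sqrt_pos.2 hB) (Real.sqrt_pos.2 hA))
    have hsA : Real.sqrt A ^ 2 = A := Real.sq_sqrt hA.le
    have hsB : Real.sqrt B ^ 2 = B := Real.sq_sqrt hB.le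
    have hsA0 : 0 < Real.sqrt A := Real.sqrt_pos.2 hA
    have hsB0 : 0 < Real.sqrt B := Real.sqrt_pos.2 hB
    calc C ≤ (Real.sqrt B / Real.sqrt A * A + B / (Real.sqrt B / Real.sqrt A)) / 2 := h
      _ = Real.sqrt A * Real.sqrt B := by
          field_simp
          nlinarith [hsA, hsB]

lemma sqrt_le' {x y : ℝ} (h1 : x ≤ y ^ 2) (h2 : 0 ≤ y) : Real.sqrt x ≤ y := by
  calc Real.sqrt x ≤ Real.sqrt (y ^ 2) := Real.sqrt_le_sqrt h1
    _ = y := Real.sqrt_sq h2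

/-- Cauchy–Schwarz for integrals of nonnegative functions. -/
lemma integral_mul_le_sqrt {α : Type*} [MeasurableSpace α] (μ : Measure α)
    (f g : α → ℝ) (hfm : AEStronglyMeasurable f μ) (hgm : AEStronglyMeasurable g μ)
    (hf2 : Integrable (fun a => f a ^ 2) μ) (hg2 : Integrable (fun a => g a ^ 2) μ)
    (hf0 : ∀ a, 0 ≤ f a) (hg0 : ∀ a, 0 ≤ g a) :
    ∫ a, f a * g a ∂μ ≤ Real.sqrt (∫ a, f a ^ 2 ∂μ) * Real.sqrt (∫ a, g a ^ 2 ∂μ) := by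
  have hfg : Integrable (fun a => f a * g a) μ := by
    refine Integrable.mono' ((hf2.add hg2).div_const 2) (hfm.mul hgm) ?_
    filter_upwards with a
    have := sq_nonneg (f a - g a)
    rw [Real.norm_eq_abs, abs_of_nonneg (mul_nonneg (hf0 a) (hg0 a))]
    simp only [Pi.add_apply]
    nlinarith
  refine le_sqrt_mul_sqrt_of_forall (integral_nonneg (fun a => sq_nonneg _))
    (integral_nonneg (fun a => sq_nonneg _)) (fun s hs => ?_)
  have hpt : ∀ a, f a * g a ≤ (s * f a ^ 2 + g a ^ 2 / s) / 2 := by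
    intro a
    rw [le_div_iff₀ (by norm_num : (0:ℝ) < 2), ← sub_nonneg]
    have hkey : s * f a ^ 2 + g a ^ 2 / s - f a * g a * 2 = (s * f a - g a) ^ 2 / s := by
      field_simp; ring
    rw [hkey]; positivity
  calc ∫ a, f a * g a ∂μ
      ≤ ∫ a, (s * f a ^ 2 + g a ^ 2 / s) / 2 ∂μ := by
        refine integral_mono hfg ?_ hpt
        exact (((hf2.const_mul s).add (hg2.div_const s)).div_const 2)
    _ = (s * (∫ a, f a ^ 2 ∂μ) + (∫ a, g a ^ 2 ∂μ) / s) / 2 := by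
        rw [integral_div, integral_add (hf2.const_mul s) (hg2.div_const s),
          integral_const_mul, integral_div]
    _ ≤ _ := le_refl _

/-- ℓ² triangle inequality on finite sums. -/
lemma l2_triangle {k : Type*} (s : Finset k) (a b : k → ℝ) :
    Real.sqrt (∑ i ∈ s, (a i + b i) ^ 2)
      ≤ Real.sqrt (∑ i ∈ s, a i ^ 2) + Real.sqrt (∑ i ∈ s, b i ^ 2) := by
  have hcs := Real.sum_mul_le_sqrt_mul_sqrt s a b
  have ha := Real.sqrt_nonneg (∑ i ∈ s, a i ^ 2)
  have hb := Real.sqrt_nonneg (∑ i ∈ s, b i ^ 2)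
  have ha2 : Real.sqrt (∑ i ∈ s, a i ^ 2) ^ 2 = ∑ i ∈ s, a i ^ 2 :=
    Real.sq_sqrt (Finset.sum_nonneg fun _ _ => sq_nonneg _)
  have hb2 : Real.sqrt (∑ i ∈ s, b i ^ 2) ^ 2 = ∑ i ∈ s, b i ^ 2 :=
    Real.sq_sqrt (Finset.sum_nonneg fun _ _ => sq_nonneg _)
  have hexp : ∑ i ∈ s, (a i + b i) ^ 2
      = (∑ i ∈ s, a i ^ 2) + 2 * (∑ i ∈ s, a i * b i) + ∑ i ∈ s, b i ^ 2 := by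
    simp [add_sq, Finset.sum_add_distrib, Finset.mul_sum, mul_assoc]
  refine sqrt_le' ?_ (by positivity)
  rw [hexp]
  nlinarith [hcs, ha, hb, ha2, hb2]

/-- ℓ² norm of a finite sum of vectors. -/
lemma l2_sum {k J : Type*} (T : Finset J) (s : Finset k) (f : J → k → ℝ) :
    Real.sqrt (∑ i ∈ s, (∑ j ∈ T, f j i) ^ 2)
      ≤ ∑ j ∈ T, Real.sqrt (∑ i ∈ s, (f j i) ^ 2) := by
  classical
  induction T using Finset.induction_on with
  | empty => simp
  | insert j T hj ih =>
      simp only [Finset.sum_insert hj]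
      calc Real.sqrt (∑ i ∈ s, (f j i + ∑ j' ∈ T, f j' i) ^ 2)
          ≤ Real.sqrt (∑ i ∈ s, (f j i) ^ 2)
            + Real.sqrt (∑ i ∈ s, (∑ j' ∈ T, f j' i) ^ 2) := l2_triangle s _ _
        _ ≤ _ := by linarith [ih]

lemma l2_smul {k : Type*} (s : Finset k) (c : ℝ) (a : k → ℝ) :
    Real.sqrt (∑ i ∈ s, (c * a i) ^ 2) = |c| * Real.sqrt (∑ i ∈ s, a i ^ 2) := by
  rw [show ∑ i ∈ s, (c * a i) ^ 2 = c ^ 2 * ∑ i ∈ s, a i ^ 2 by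
    rw [Finset.mul_sum]; exact Finset.sum_congr rfl fun i _ => by ring,
    Real.sqrt_mul (sq_nonneg c), Real.sqrt_sq_eq_abs]


lemma proj_opt {n : ℕ} (p u c : Fin n → ℝ)
    (h : ∑ j, (p j - c j) ^ 2 ≤ ∑ j, (u j - c j) ^ 2) :
    (∑ j, u j * (2 * c j)) - ∑ j, u j ^ 2 ≤ (∑ j, p j * (2 * c j)) - ∑ j, p j ^ 2 := by
  have e : ∀ q : Fin n → ℝ, ∑ j, (q j - c j) ^ 2
      = ((∑ j, q j ^ 2) - ∑ j, q j * (2 * c j)) + ∑ j, c j ^ 2 := by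
    intro q
    rw [← Finset.sum_sub_distrib, ← Finset.sum_add_distrib]
    exact Finset.sum_congr rfl fun j _ => by ring
  rw [e p, e u] at h
  linarith

lemma proj_obtuse {n : ℕ} {C : Set (Fin n → ℝ)} (hC : Convex ℝ C)
    {p c u : Fin n → ℝ} (hp : p ∈ C) (hu : u ∈ C)
    (hmin : ∀ z ∈ C, ∑ j, (p j - c j) ^ 2 ≤ ∑ j, (z j - c j) ^ 2) :
    ∑ j, (c j - p j) * (u j - p j) ≤ 0 := by
  set B := ∑ j, (p j - c j) * (u j - p j) with hB
  have key : ∀ t : ℝ, 0 < t → t ≤ 1 → 0 ≤ 2 * B + t * ∑ j, (u j - p j) ^ 2 := by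
    intro t ht0 ht1
    have hz : (fun j => p j + t * (u j - p j)) ∈ C := by
      have := hC hp hu (by linarith : (0:ℝ) ≤ 1 - t) ht0.le (by ring)
      convert this using 1
      funext j
      simp only [Pi.add_apply, Pi.smul_apply, smul_eq_mul]
      ring
    have h := hmin _ hz
    have e : ∑ j, ((fun j => p j + t * (u j - p j)) j - c j) ^ 2
        = ∑ j, (p j - c j) ^ 2 + t * (2 * B) + t ^ 2 * ∑ j, (u j - p j) ^ 2 := by
      rw [hB, Finset.mul_sum, Finset.mul_sum, Finset.mul_sum, ← Finset.sum_add_distrib,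
        ← Finset.sum_add_distrib]
      exact Finset.sum_congr rfl fun j _ => by ring
    rw [e] at h
    nlinarith
  have hB0 : 0 ≤ B := by
    by_contra hc
    push_neg at hc
    set Cq := ∑ j, (u j - p j) ^ 2 with hCq
    have hCq0 : 0 ≤ Cq := Finset.sum_nonneg fun _ _ => sq_nonneg _
    rcases eq_or_lt_of_le hCq0 with h0 | h0
    · have := key 1 one_pos le_rfl
      rw [← h0] at this
      linarith
    · have ht : 0 < min 1 (-B / Cq) := lt_min one_pos (div_pos (by linarith) h0)
      have hk := key _ ht (min_le_left _ _)
      have h2 : min 1 (-B / Cq) * Cq ≤ -B := by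
        calc min 1 (-B / Cq) * Cq ≤ (-B / Cq) * Cq :=
              mul_le_mul_of_nonneg_right (min_le_right _ _) hCq0
          _ = -B := by field_simp
      linarith
  have hsum : (∑ j, (c j - p j) * (u j - p j)) + B = 0 := by
    rw [hB, ← Finset.sum_add_distrib]
    exact Finset.sum_eq_zero fun j _ => by ring
  linarith

lemma proj_nonexpansive {n : ℕ} {C : Set (Fin n → ℝ)} (hC : Convex ℝ C)
    {p q c c' : Fin n → ℝ} (hp : p ∈ C) (hq : q ∈ C)
    (hminp : ∀ z ∈ C, ∑ j, (p j - c j) ^ 2 ≤ ∑ j, (z j - c j) ^ 2)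
    (hminq : ∀ z ∈ C, ∑ j, (q j - c' j) ^ 2 ≤ ∑ j, (z j - c' j) ^ 2) :
    Real.sqrt (∑ j, (p j - q j) ^ 2) ≤ Real.sqrt (∑ j, (c j - c' j) ^ 2) := by
  have B1 := proj_obtuse hC hp hq hminp
  have B2 := proj_obtuse hC hq hp hminq
  have hzero : ∑ j, ((c j - c' j) * (p j - q j) - (p j - q j) ^ 2
      + (c j - p j) * (q j - p j) + (c' j - q j) * (p j - q j)) = 0 :=
    Finset.sum_eq_zero fun j _ => by ring
  rw [Finset.sum_add_distrib, Finset.sum_add_distrib, Finset.sum_sub_distrib] at hzero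
  have key : ∑ j, (p j - q j) ^ 2 ≤ ∑ j, (c j - c' j) * (p j - q j) := by linarith
  have hcs := Real.sum_mul_le_sqrt_mul_sqrt Finset.univ (fun j => c j - c' j)
    (fun j => p j - q j)
  set X := Real.sqrt (∑ j, (p j - q j) ^ 2) with hX
  have hX2 : X ^ 2 = ∑ j, (p j - q j) ^ 2 :=
    Real.sq_sqrt (Finset.sum_nonneg fun _ _ => sq_nonneg _)
  rcases eq_or_lt_of_le (Real.sqrt_nonneg (∑ j, (p j - q j) ^ 2)) with h0 | h0
  · rw [hX, ← h0]
    positivity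
  · rw [← hX] at h0
    have hmul : X * X ≤ Real.sqrt (∑ j, (c j - c' j) ^ 2) * X := by
      nlinarith [key, hcs, hX2]
    exact le_of_mul_le_mul_right hmul h0

lemma log_sub_le_div {a b : ℝ} (ha : 0 < a) (hb : 0 < b) :
    Real.log b - Real.log a ≤ (b - a) / a := by
  have h := Real.log_le_sub_one_of_pos (div_pos hb ha)
  rw [Real.log_div hb.ne' ha.ne'] at h
  calc Real.log b - Real.log a ≤ b / a - 1 := h
    _ = (b - a) / a := by field_simp

lemma abs_log_sub_le {a b c : ℝ} (hc : 0 < c) (ha : c ≤ a) (hb : c ≤ b) :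
    |Real.log b - Real.log a| ≤ |b - a| / c := by
  have ha0 : 0 < a := lt_of_lt_of_le hc ha
  have hb0 : 0 < b := lt_of_lt_of_le hc hb
  rcases le_total a b with h | h
  · rw [abs_of_nonneg (by rw [sub_nonneg]; exact Real.log_le_log ha0 h),
      abs_of_nonneg (by linarith)]
    calc Real.log b - Real.log a ≤ (b - a) / a := log_sub_le_div ha0 hb0
      _ ≤ (b - a) / c := by
          apply div_le_div_of_nonneg_left (by linarith) hc ha
  · rw [abs_of_nonpos (by rw [sub_nonpos]; exact Real.log_le_log hb0 h),
      abs_of_nonpos (by linarith)]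
    calc -(Real.log b - Real.log a) = Real.log a - Real.log b := by ring
      _ ≤ (a - b) / b := log_sub_le_div hb0 ha0
      _ ≤ (a - b) / c := by
          apply div_le_div_of_nonneg_left (by linarith) hc hb
      _ = -(b - a) / c := by ring


section MeasureSide

set_option linter.unusedSectionVars false

variable {d : ℕ} {μ : Measure (Fin d → ℝ)} [IsProbabilityMeasure μ]
  {β : ℝ}

lemma intg_sq (H : Integrable (fun ξ : Fin d → ℝ => ∑ i, ξ i ^ 2) μ) (i : Fin d) :
    Integrable (fun ξ : Fin d → ℝ => ξ i ^ 2) μ :=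
  H.mono' ((measurable_pi_apply i).pow_const 2).aestronglyMeasurable
    (Filter.Eventually.of_forall fun ξ => by
      rw [Real.norm_eq_abs, abs_of_nonneg (sq_nonneg _)]
      exact Finset.single_le_sum (f := fun m => ξ m ^ 2)
        (fun m _ => sq_nonneg _) (Finset.mem_univ i))

lemma intg_abs (H : Integrable (fun ξ : Fin d → ℝ => ∑ i, ξ i ^ 2) μ) (i : Fin d) :
    Integrable (fun ξ : Fin d → ℝ => |ξ i|) μ :=
  (((integrable_const (1:ℝ)).add (intg_sq H i)).div_const 2).mono'
    (measurable_pi_apply i).abs.aestronglyMeasurable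
    (Filter.Eventually.of_forall fun ξ => by
      rw [Real.norm_eq_abs, abs_abs]
      have h0 := sq_nonneg (|ξ i| - 1)
      simp only [Pi.add_apply]
      nlinarith [sq_abs (ξ i)])

lemma intg_prod (H : Integrable (fun ξ : Fin d → ℝ => ∑ i, ξ i ^ 2) μ) (i m : Fin d) :
    Integrable (fun ξ : Fin d → ℝ => |ξ i * ξ m|) μ :=
  H.mono' ((measurable_pi_apply i).mul (measurable_pi_apply m)).abs.aestronglyMeasurable
    (Filter.Eventually.of_forall fun ξ => by
      rw [Real.norm_eq_abs, abs_abs, abs_mul]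
      have h1 : ξ i ^ 2 ≤ ∑ k, ξ k ^ 2 := Finset.single_le_sum (f := fun k => ξ k ^ 2)
        (fun k _ => sq_nonneg _) (Finset.mem_univ i)
      have h2 : ξ m ^ 2 ≤ ∑ k, ξ k ^ 2 := Finset.single_le_sum (f := fun k => ξ k ^ 2)
        (fun k _ => sq_nonneg _) (Finset.mem_univ m)
      nlinarith [sq_nonneg (|ξ i| - |ξ m|), sq_abs (ξ i), sq_abs (ξ m)])

lemma abs_int_prod_le (H : Integrable (fun ξ : Fin d → ℝ => ∑ i, ξ i ^ 2) μ) (i m : Fin d) :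
    ∫ ξ, |ξ i * ξ m| ∂μ
      ≤ Real.sqrt (∫ ξ, ξ i ^ 2 ∂μ) * Real.sqrt (∫ ξ, ξ m ^ 2 ∂μ) := by
  have h := integral_mul_le_sqrt μ (fun ξ => |ξ i|) (fun ξ => |ξ m|)
    (measurable_pi_apply i).abs.aestronglyMeasurable
    (measurable_pi_apply m).abs.aestronglyMeasurable
    (by simpa [sq_abs] using intg_sq H i) (by simpa [sq_abs] using intg_sq H m)
    (fun _ => abs_nonneg _) (fun _ => abs_nonneg _)
  simpa [abs_mul, sq_abs] using h

lemma abs_int_le (H : Integrable (fun ξ : Fin d → ℝ => ∑ i, ξ i ^ 2) μ) (i : Fin d) :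
    ∫ ξ, |ξ i| ∂μ ≤ Real.sqrt (∫ ξ, ξ i ^ 2 ∂μ) := by
  have h := integral_mul_le_sqrt μ (fun ξ => |ξ i|) (fun _ => (1:ℝ))
    (measurable_pi_apply i).abs.aestronglyMeasurable aestronglyMeasurable_const
    (by simpa [sq_abs] using intg_sq H i) (by simpa using integrable_const (1:ℝ))
    (fun _ => abs_nonneg _) (fun _ => zero_le_one)
  simpa using h

lemma sum_int_sq (H : Integrable (fun ξ : Fin d → ℝ => ∑ i, ξ i ^ 2) μ) :
    ∑ i, ∫ ξ, ξ i ^ 2 ∂μ = ∫ ξ, ∑ i, ξ i ^ 2 ∂μ :=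
  (integral_finset_sum Finset.univ (fun i _ => intg_sq H i)).symm

lemma meas_T (v : Fin d → ℝ) : Measurable (fun ξ : Fin d → ℝ => ∑ m, v m * ξ m) :=
  Finset.measurable_sum Finset.univ (fun m _ => by fun_prop)

lemma denom_ge {v ξ : Fin d → ℝ} (hβ1 : β < 1) (h : -β ≤ ∑ m, v m * ξ m) :
    1 - β ≤ 1 + ∑ m, v m * ξ m := by linarith

lemma intg_frac (H : Integrable (fun ξ : Fin d → ℝ => ∑ i, ξ i ^ 2) μ)
    (hβ1 : β < 1) {v : Fin d → ℝ}
    (hvae : ∀ᵐ ξ ∂μ, -β ≤ ∑ m, v m * ξ m) (i : Fin d) :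
    Integrable (fun ξ : Fin d → ℝ => ξ i / (1 + ∑ m, v m * ξ m)) μ := by
  refine ((intg_abs H i).div_const (1 - β)).mono'
    ((measurable_pi_apply i).div ((measurable_const.add (meas_T v)))).aestronglyMeasurable ?_
  filter_upwards [hvae] with ξ hξ
  have hden : 1 - β ≤ 1 + ∑ m, v m * ξ m := denom_ge hβ1 hξ
  have hden0 : (0:ℝ) < 1 + ∑ m, v m * ξ m := by linarith
  rw [Real.norm_eq_abs, abs_div, abs_of_pos hden0]
  exact div_le_div_of_nonneg_left (abs_nonneg _) (by linarith) hden

lemma bound_vT {v ξ : Fin d → ℝ} (hv1 : ∀ m, 0 ≤ v m) (hv2 : ∑ m, v m ≤ 1) :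
    |∑ m, v m * ξ m| ≤ ∑ m, |ξ m| := by
  calc |∑ m, v m * ξ m| ≤ ∑ m, |v m * ξ m| := Finset.abs_sum_le_sum_abs _ _
    _ ≤ ∑ m, |ξ m| := Finset.sum_le_sum fun m _ => by
        rw [abs_mul, abs_of_nonneg (hv1 m)]
        have hvm1 : v m ≤ 1 := le_trans (Finset.single_le_sum
          (f := fun k => v k) (fun k _ => hv1 k) (Finset.mem_univ m)) hv2
        nlinarith [abs_nonneg (ξ m)]

lemma intg_log (H : Integrable (fun ξ : Fin d → ℝ => ∑ i, ξ i ^ 2) μ)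
    (hβ0 : 0 ≤ β) (hβ1 : β < 1) {v : Fin d → ℝ}
    (hv1 : ∀ m, 0 ≤ v m) (hv2 : ∑ m, v m ≤ 1)
    (hvae : ∀ᵐ ξ ∂μ, -β ≤ ∑ m, v m * ξ m) :
    Integrable (fun ξ : Fin d → ℝ => Real.log (1 + ∑ m, v m * ξ m)) μ := by
  refine ((integrable_finset_sum Finset.univ (fun m _ => intg_abs H m)).div_const
    (1 - β)).mono'
    (Real.measurable_log.comp (measurable_const.add (meas_T v))).aestronglyMeasurable ?_
  filter_upwards [hvae] with ξ hξ
  have hden : 1 - β ≤ 1 + ∑ m, v m * ξ m := denom_ge hβ1 hξ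
  have hc : (0:ℝ) < 1 - β := by linarith
  rw [Real.norm_eq_abs]
  calc |Real.log (1 + ∑ m, v m * ξ m)|
      = |Real.log (1 + ∑ m, v m * ξ m) - Real.log (1 - β + β)| := by
        rw [show (1:ℝ) - β + β = 1 by ring, Real.log_one, sub_zero]
    _ ≤ |1 + (∑ m, v m * ξ m) - (1 - β + β)| / (1 - β) :=
        abs_log_sub_le hc (by linarith) hden
    _ = |∑ m, v m * ξ m| / (1 - β) := by
        rw [show 1 + (∑ m, v m * ξ m) - (1 - β + β) = ∑ m, v m * ξ m by ring]
    _ ≤ (∑ m, |ξ m|) / (1 - β) := by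
        gcongr
        exact bound_vT hv1 hv2

lemma abs_integral_le {f : (Fin d → ℝ) → ℝ} (g : (Fin d → ℝ) → ℝ)
    (hf : Integrable f μ) (hg : Integrable g μ)
    (hae : ∀ᵐ ξ ∂μ, |f ξ| ≤ g ξ) : |∫ ξ, f ξ ∂μ| ≤ ∫ ξ, g ξ ∂μ := by
  calc |∫ ξ, f ξ ∂μ| ≤ ∫ ξ, |f ξ| ∂μ := by
        simpa [Real.norm_eq_abs] using norm_integral_le_integral_norm (μ := μ) f
    _ ≤ ∫ ξ, g ξ ∂μ := integral_mono_ae hf.abs hg hae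

lemma gnorm (H : Integrable (fun ξ : Fin d → ℝ => ∑ i, ξ i ^ 2) μ)
    (hβ1 : β < 1) {v : Fin d → ℝ}
    (hvae : ∀ᵐ ξ ∂μ, -β ≤ ∑ m, v m * ξ m) :
    Real.sqrt (∑ i, (∫ ξ, (-(ξ i) / (1 + ∑ m, v m * ξ m)) ∂μ) ^ 2)
      ≤ Real.sqrt (∫ ξ, ∑ i, ξ i ^ 2 ∂μ) / (1 - β) := by
  have hc : (0:ℝ) < 1 - β := by linarith
  have hcomp : ∀ i, |∫ ξ, (-(ξ i) / (1 + ∑ m, v m * ξ m)) ∂μ|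
      ≤ (∫ ξ, |ξ i| ∂μ) / (1 - β) := by
    intro i
    have := abs_integral_le (f := fun ξ => -(ξ i) / (1 + ∑ m, v m * ξ m))
      (fun ξ => |ξ i| / (1 - β))
      (by
        have hni : Integrable (fun ξ : Fin d → ℝ
            => -(ξ i / (1 + ∑ m, v m * ξ m))) μ := (intg_frac H hβ1 hvae i).neg
        simpa [neg_div] using hni)
      ((intg_abs H i).div_const _) ?_
    · simpa [integral_div] using this
    · filter_upwards [hvae] with ξ hξ
      have hden : 1 - β ≤ 1 + ∑ m, v m * ξ m := denom_ge hβ1 hξ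
      have hd0 : (0:ℝ) < 1 + ∑ m, v m * ξ m := by linarith
      rw [abs_div, abs_neg, abs_of_pos hd0]
      exact div_le_div_of_nonneg_left (abs_nonneg _) hc hden
  have hsq : ∀ i, (∫ ξ, (-(ξ i) / (1 + ∑ m, v m * ξ m)) ∂μ) ^ 2
      ≤ (∫ ξ, ξ i ^ 2 ∂μ) / (1 - β) ^ 2 := by
    intro i
    have h1 : (∫ ξ, |ξ i| ∂μ) / (1 - β) ≤ Real.sqrt (∫ ξ, ξ i ^ 2 ∂μ) / (1 - β) := by
      gcongr
      exact abs_int_le H i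
    have h2 := (hcomp i).trans h1
    have h3 : 0 ≤ Real.sqrt (∫ ξ, ξ i ^ 2 ∂μ) / (1 - β) := by positivity
    calc (∫ ξ, (-(ξ i) / (1 + ∑ m, v m * ξ m)) ∂μ) ^ 2
        = |∫ ξ, (-(ξ i) / (1 + ∑ m, v m * ξ m)) ∂μ| ^ 2 := (sq_abs _).symm
      _ ≤ (Real.sqrt (∫ ξ, ξ i ^ 2 ∂μ) / (1 - β)) ^ 2 :=
          pow_le_pow_left₀ (abs_nonneg _) h2 2
      _ = (∫ ξ, ξ i ^ 2 ∂μ) / (1 - β) ^ 2 := by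
          rw [div_pow, Real.sq_sqrt (integral_nonneg fun ξ => sq_nonneg _)]
  calc Real.sqrt (∑ i, (∫ ξ, (-(ξ i) / (1 + ∑ m, v m * ξ m)) ∂μ) ^ 2)
      ≤ Real.sqrt (∑ i, (∫ ξ, ξ i ^ 2 ∂μ) / (1 - β) ^ 2) :=
        Real.sqrt_le_sqrt (Finset.sum_le_sum fun i _ => hsq i)
    _ = Real.sqrt ((∫ ξ, ∑ i, ξ i ^ 2 ∂μ) / (1 - β) ^ 2) := by
        rw [← Finset.sum_div, sum_int_sq H]
    _ = Real.sqrt (∫ ξ, ∑ i, ξ i ^ 2 ∂μ) / (1 - β) := by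
        rw [Real.sqrt_div (integral_nonneg fun ξ => Finset.sum_nonneg
          fun i _ => sq_nonneg _), Real.sqrt_sq hc.le]

lemma philip (H : Integrable (fun ξ : Fin d → ℝ => ∑ i, ξ i ^ 2) μ)
    (hβ0 : 0 ≤ β) (hβ1 : β < 1) {v w : Fin d → ℝ}
    (hv1 : ∀ m, 0 ≤ v m) (hv2 : ∑ m, v m ≤ 1)
    (hw1 : ∀ m, 0 ≤ w m) (hw2 : ∑ m, w m ≤ 1)
    (hvae : ∀ᵐ ξ ∂μ, -β ≤ ∑ m, v m * ξ m)
    (hwae : ∀ᵐ ξ ∂μ, -β ≤ ∑ m, w m * ξ m) :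
    |(∫ ξ, -Real.log (1 + ∑ m, w m * ξ m) ∂μ)
        - ∫ ξ, -Real.log (1 + ∑ m, v m * ξ m) ∂μ|
      ≤ Real.sqrt (∫ ξ, ∑ i, ξ i ^ 2 ∂μ) / (1 - β)
          * Real.sqrt (∑ i, (w i - v i) ^ 2) := by
  have hc : (0:ℝ) < 1 - β := by linarith
  have hlogv := intg_log H hβ0 hβ1 hv1 hv2 hvae
  have hlogw := intg_log H hβ0 hβ1 hw1 hw2 hwae
  have e : (∫ ξ, -Real.log (1 + ∑ m, w m * ξ m) ∂μ)
        - ∫ ξ, -Real.log (1 + ∑ m, v m * ξ m) ∂μ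
      = ∫ ξ, (Real.log (1 + ∑ m, v m * ξ m) - Real.log (1 + ∑ m, w m * ξ m)) ∂μ := by
    rw [integral_sub hlogv hlogw, integral_neg, integral_neg]
    ring
  rw [e]
  have hstep : |∫ ξ, (Real.log (1 + ∑ m, v m * ξ m)
        - Real.log (1 + ∑ m, w m * ξ m)) ∂μ|
      ≤ ∫ ξ, (∑ m, |w m - v m| * |ξ m|) / (1 - β) ∂μ := by
    refine abs_integral_le _ (hlogv.sub hlogw)
      (((integrable_finset_sum Finset.univ
        (fun m _ => (intg_abs H m).const_mul (|w m - v m|))).div_const (1 - β))) ?_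
    filter_upwards [hvae, hwae] with ξ hv hw
    have hdv : 1 - β ≤ 1 + ∑ m, v m * ξ m := denom_ge hβ1 hv
    have hdw : 1 - β ≤ 1 + ∑ m, w m * ξ m := denom_ge hβ1 hw
    calc |Real.log (1 + ∑ m, v m * ξ m) - Real.log (1 + ∑ m, w m * ξ m)|
        ≤ |(1 + ∑ m, v m * ξ m) - (1 + ∑ m, w m * ξ m)| / (1 - β) :=
          abs_log_sub_le hc hdw hdv
      _ ≤ (∑ m, |w m - v m| * |ξ m|) / (1 - β) := by
          gcongr
          have h1 : ∑ m, (v m - w m) * ξ m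
              = (∑ m, v m * ξ m) - ∑ m, w m * ξ m := by
            rw [← Finset.sum_sub_distrib]
            exact Finset.sum_congr rfl fun m _ => by ring
          rw [show (1 + ∑ m, v m * ξ m) - (1 + ∑ m, w m * ξ m)
              = (∑ m, v m * ξ m) - ∑ m, w m * ξ m by ring, ← h1]
          calc |∑ m, (v m - w m) * ξ m| ≤ ∑ m, |(v m - w m) * ξ m| :=
                Finset.abs_sum_le_sum_abs _ _
            _ = ∑ m, |w m - v m| * |ξ m| := Finset.sum_congr rfl fun m _ => by
                rw [abs_mul, abs_sub_comm]
  have hsum : ∫ ξ, (∑ m, |w m - v m| * |ξ m|) / (1 - β) ∂μ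
      = (∑ m, |w m - v m| * ∫ ξ, |ξ m| ∂μ) / (1 - β) := by
    rw [integral_div, integral_finset_sum Finset.univ
      (fun m _ => (intg_abs H m).const_mul (|w m - v m|))]
    congr 1
    exact Finset.sum_congr rfl fun m _ => integral_const_mul _ _
  have hcs : ∑ m, |w m - v m| * ∫ ξ, |ξ m| ∂μ
      ≤ Real.sqrt (∑ m, (w m - v m) ^ 2) * Real.sqrt (∫ ξ, ∑ i, ξ i ^ 2 ∂μ) := by
    calc ∑ m, |w m - v m| * ∫ ξ, |ξ m| ∂μ
        ≤ Real.sqrt (∑ m, |w m - v m| ^ 2)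
            * Real.sqrt (∑ m, (∫ ξ, |ξ m| ∂μ) ^ 2) :=
          Real.sum_mul_le_sqrt_mul_sqrt _ _ _
      _ ≤ Real.sqrt (∑ m, (w m - v m) ^ 2) * Real.sqrt (∫ ξ, ∑ i, ξ i ^ 2 ∂μ) := by
          apply mul_le_mul
          · apply Real.sqrt_le_sqrt
            exact le_of_eq (Finset.sum_congr rfl fun m _ => sq_abs _)
          · apply Real.sqrt_le_sqrt
            rw [← sum_int_sq H]
            refine Finset.sum_le_sum fun m _ => ?_
            calc (∫ ξ, |ξ m| ∂μ) ^ 2 ≤ Real.sqrt (∫ ξ, ξ m ^ 2 ∂μ) ^ 2 :=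
                  pow_le_pow_left₀ (integral_nonneg fun ξ => abs_nonneg _) (abs_int_le H m) 2
              _ = ∫ ξ, ξ m ^ 2 ∂μ := Real.sq_sqrt (integral_nonneg fun ξ => sq_nonneg _)
          · exact Real.sqrt_nonneg _
          · exact Real.sqrt_nonneg _
  calc |∫ ξ, (Real.log (1 + ∑ m, v m * ξ m) - Real.log (1 + ∑ m, w m * ξ m)) ∂μ|
      ≤ (∑ m, |w m - v m| * ∫ ξ, |ξ m| ∂μ) / (1 - β) := by rw [← hsum]; exact hstep
    _ ≤ (Real.sqrt (∑ m, (w m - v m) ^ 2) * Real.sqrt (∫ ξ, ∑ i, ξ i ^ 2 ∂μ)) / (1 - β) := by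
        gcongr
    _ = Real.sqrt (∫ ξ, ∑ i, ξ i ^ 2 ∂μ) / (1 - β) * Real.sqrt (∑ i, (w i - v i) ^ 2) := by
        ring

lemma grad_ineq (H : Integrable (fun ξ : Fin d → ℝ => ∑ i, ξ i ^ 2) μ)
    (hβ0 : 0 ≤ β) (hβ1 : β < 1) {v w : Fin d → ℝ}
    (hv1 : ∀ m, 0 ≤ v m) (hv2 : ∑ m, v m ≤ 1)
    (hw1 : ∀ m, 0 ≤ w m) (hw2 : ∑ m, w m ≤ 1)
    (hvae : ∀ᵐ ξ ∂μ, -β ≤ ∑ m, v m * ξ m)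
    (hwae : ∀ᵐ ξ ∂μ, -β ≤ ∑ m, w m * ξ m) :
    ∑ i, (∫ ξ, (-(ξ i) / (1 + ∑ m, v m * ξ m)) ∂μ) * (w i - v i)
      ≤ (∫ ξ, -Real.log (1 + ∑ m, w m * ξ m) ∂μ)
        - ∫ ξ, -Real.log (1 + ∑ m, v m * ξ m) ∂μ := by
  set h : (Fin d → ℝ) → ℝ :=
    fun ξ => ∑ i, (w i - v i) * (ξ i / (1 + ∑ m, v m * ξ m)) with hh
  have hInt_frac := intg_frac H hβ1 hvae
  have hInt_h : Integrable h μ :=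
    integrable_finset_sum _ (fun i _ => (hInt_frac i).const_mul _)
  have hint_h_eq : ∫ ξ, h ξ ∂μ
      = ∑ i, (w i - v i) * ∫ ξ, ξ i / (1 + ∑ m, v m * ξ m) ∂μ := by
    rw [hh, integral_finset_sum _ (fun i _ => (hInt_frac i).const_mul _)]
    exact Finset.sum_congr rfl fun i _ => integral_const_mul _ _
  have hlogv := intg_log H hβ0 hβ1 hv1 hv2 hvae
  have hlogw := intg_log H hβ0 hβ1 hw1 hw2 hwae
  have hnonneg : 0 ≤ ∫ ξ, (-Real.log (1 + ∑ m, w m * ξ m)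
      + Real.log (1 + ∑ m, v m * ξ m) + h ξ) ∂μ := by
    refine integral_nonneg_of_ae ?_
    filter_upwards [hvae, hwae] with ξ hvx hwx
    simp only [Pi.zero_apply]
    have hav : (0:ℝ) < 1 + ∑ m, v m * ξ m := by linarith
    have haw : (0:ℝ) < 1 + ∑ m, w m * ξ m := by linarith
    have hlog := log_sub_le_div hav haw
    have hhξ : h ξ = ((1 + ∑ m, w m * ξ m) - (1 + ∑ m, v m * ξ m))
        / (1 + ∑ m, v m * ξ m) := by
      rw [hh]
      have h1 : ∑ m, (w m - v m) * ξ m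
          = (∑ m, w m * ξ m) - ∑ m, v m * ξ m := by
        rw [← Finset.sum_sub_distrib]
        exact Finset.sum_congr rfl fun m _ => by ring
      rw [show (1 + ∑ m, w m * ξ m) - (1 + ∑ m, v m * ξ m)
          = (∑ m, w m * ξ m) - ∑ m, v m * ξ m by ring, ← h1, Finset.sum_div]
      exact Finset.sum_congr rfl fun i _ => by ring
    rw [hhξ]
    linarith
  have hsplit : ∫ ξ, (-Real.log (1 + ∑ m, w m * ξ m)
        + Real.log (1 + ∑ m, v m * ξ m) + h ξ) ∂μ
      = (∫ ξ, -Real.log (1 + ∑ m, w m * ξ m) ∂μ)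
        + (∫ ξ, Real.log (1 + ∑ m, v m * ξ m) ∂μ) + ∫ ξ, h ξ ∂μ := by
    have hN : Integrable (fun ξ : Fin d → ℝ
        => -Real.log (1 + ∑ m, w m * ξ m)) μ := hlogw.neg
    have hA : Integrable (fun ξ : Fin d → ℝ
        => -Real.log (1 + ∑ m, w m * ξ m) + Real.log (1 + ∑ m, v m * ξ m)) μ :=
      hN.add hlogv
    rw [integral_add hA hInt_h, integral_add hN hlogv]
  have e1 : ∫ ξ, -Real.log (1 + ∑ m, v m * ξ m) ∂μ
      = -∫ ξ, Real.log (1 + ∑ m, v m * ξ m) ∂μ := integral_neg _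
  have hneg : ∀ i, (∫ ξ, (-(ξ i) / (1 + ∑ m, v m * ξ m)) ∂μ)
      = -∫ ξ, ξ i / (1 + ∑ m, v m * ξ m) ∂μ := by
    intro i
    rw [← integral_neg]
    exact integral_congr_ae (Filter.Eventually.of_forall fun ξ => by simp [neg_div])
  have eL : ∑ i, (∫ ξ, (-(ξ i) / (1 + ∑ m, v m * ξ m)) ∂μ) * (w i - v i)
      = -∫ ξ, h ξ ∂μ := by
    rw [hint_h_eq, ← Finset.sum_neg_distrib]
    exact Finset.sum_congr rfl fun i _ => by rw [hneg i]; ring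
  linarith

lemma gvec_lip (H : Integrable (fun ξ : Fin d → ℝ => ∑ i, ξ i ^ 2) μ)
    (hβ1 : β < 1) {v w : Fin d → ℝ}
    (hvae : ∀ᵐ ξ ∂μ, -β ≤ ∑ m, v m * ξ m)
    (hwae : ∀ᵐ ξ ∂μ, -β ≤ ∑ m, w m * ξ m) :
    Real.sqrt (∑ i, ((∫ ξ, (-(ξ i) / (1 + ∑ m, v m * ξ m)) ∂μ)
        - ∫ ξ, (-(ξ i) / (1 + ∑ m, w m * ξ m)) ∂μ) ^ 2)
      ≤ (∫ ξ, ∑ i, ξ i ^ 2 ∂μ) / (1 - β) ^ 2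
          * Real.sqrt (∑ i, (v i - w i) ^ 2) := by
  have hc : (0:ℝ) < 1 - β := by linarith
  set s : Fin d → ℝ := fun i => Real.sqrt (∫ ξ, ξ i ^ 2 ∂μ) with hs
  have hs0 : ∀ i, 0 ≤ s i := fun i => Real.sqrt_nonneg _
  have hssq : ∀ i, s i ^ 2 = ∫ ξ, ξ i ^ 2 ∂μ :=
    fun i => Real.sq_sqrt (integral_nonneg fun ξ => sq_nonneg _)
  set K : ℝ := Real.sqrt (∑ m, (v m - w m) ^ 2) with hK
  have hK0 : 0 ≤ K := Real.sqrt_nonneg _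
  set M : ℝ := ∫ ξ, ∑ i, ξ i ^ 2 ∂μ with hM
  have hM0 : 0 ≤ M := integral_nonneg fun ξ => Finset.sum_nonneg fun i _ => sq_nonneg _
  have hsums : ∑ m, s m ^ 2 = M := by
    rw [hM, ← sum_int_sq H]
    exact Finset.sum_congr rfl fun m _ => hssq m
  -- componentwise bound
  have hcomp : ∀ i, |(∫ ξ, (-(ξ i) / (1 + ∑ m, v m * ξ m)) ∂μ)
      - ∫ ξ, (-(ξ i) / (1 + ∑ m, w m * ξ m)) ∂μ|
      ≤ s i * (K * Real.sqrt M) / (1 - β) ^ 2 := by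
    intro i
    have hfv := intg_frac H hβ1 hvae i
    have hfw := intg_frac H hβ1 hwae i
    have hdiff : (∫ ξ, (-(ξ i) / (1 + ∑ m, v m * ξ m)) ∂μ)
        - ∫ ξ, (-(ξ i) / (1 + ∑ m, w m * ξ m)) ∂μ
        = ∫ ξ, (ξ i / (1 + ∑ m, w m * ξ m) - ξ i / (1 + ∑ m, v m * ξ m)) ∂μ := by
      rw [integral_sub hfw hfv]
      have h1 : ∀ u : Fin d → ℝ, (∫ ξ, (-(ξ i) / (1 + ∑ m, u m * ξ m)) ∂μ)
          = -∫ ξ, ξ i / (1 + ∑ m, u m * ξ m) ∂μ := by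
        intro u
        rw [← integral_neg]
        exact integral_congr_ae (Filter.Eventually.of_forall fun ξ => by simp [neg_div])
      rw [h1 v, h1 w]
      ring
    rw [hdiff]
    have hbound := abs_integral_le
      (fun ξ => (∑ m, |v m - w m| * |ξ i * ξ m|) / (1 - β) ^ 2)
      (hfw.sub hfv)
      ((integrable_finset_sum Finset.univ
        (fun m _ => (intg_prod H i m).const_mul (|v m - w m|))).div_const _) ?_
    · -- evaluate the dominating integral
      have hev : ∫ ξ, (∑ m, |v m - w m| * |ξ i * ξ m|) / (1 - β) ^ 2 ∂μ
          = (∑ m, |v m - w m| * ∫ ξ, |ξ i * ξ m| ∂μ) / (1 - β) ^ 2 := by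
        rw [integral_div, integral_finset_sum Finset.univ
          (fun m _ => (intg_prod H i m).const_mul (|v m - w m|))]
        congr 1
        exact Finset.sum_congr rfl fun m _ => integral_const_mul _ _
      refine le_trans (hbound.trans (le_of_eq hev)) ?_
      rw [div_le_div_iff_of_pos_right (by positivity)]
      calc ∑ m, |v m - w m| * ∫ ξ, |ξ i * ξ m| ∂μ
          ≤ ∑ m, |v m - w m| * (s i * s m) := by
            refine Finset.sum_le_sum fun m _ => ?_
            exact mul_le_mul_of_nonneg_left (abs_int_prod_le H i m) (abs_nonneg _)
        _ = s i * ∑ m, |v m - w m| * s m := by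
            rw [Finset.mul_sum]
            exact Finset.sum_congr rfl fun m _ => by ring
        _ ≤ s i * (K * Real.sqrt M) := by
            refine mul_le_mul_of_nonneg_left ?_ (hs0 i)
            calc ∑ m, |v m - w m| * s m
                ≤ Real.sqrt (∑ m, |v m - w m| ^ 2) * Real.sqrt (∑ m, s m ^ 2) :=
                  Real.sum_mul_le_sqrt_mul_sqrt _ _ _
              _ = K * Real.sqrt M := by
                  rw [hsums, hK]
                  congr 2
                  exact Finset.sum_congr rfl fun m _ => sq_abs _
    · filter_upwards [hvae, hwae] with ξ hvx hwx
      simp only [Pi.sub_apply]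
      have hav : (0:ℝ) < 1 + ∑ m, v m * ξ m := by linarith
      have haw : (0:ℝ) < 1 + ∑ m, w m * ξ m := by linarith
      have hdv : 1 - β ≤ 1 + ∑ m, v m * ξ m := by linarith
      have hdw : 1 - β ≤ 1 + ∑ m, w m * ξ m := by linarith
      have hid : ξ i / (1 + ∑ m, w m * ξ m) - ξ i / (1 + ∑ m, v m * ξ m)
          = ξ i * ((∑ m, v m * ξ m) - ∑ m, w m * ξ m)
            / ((1 + ∑ m, w m * ξ m) * (1 + ∑ m, v m * ξ m)) := by
        field_simp
        ring
      rw [hid, abs_div, abs_mul, abs_of_pos (mul_pos haw hav)]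
      have hden2 : (1 - β) ^ 2 ≤ (1 + ∑ m, w m * ξ m) * (1 + ∑ m, v m * ξ m) := by
        nlinarith
      calc |ξ i| * |(∑ m, v m * ξ m) - ∑ m, w m * ξ m|
            / ((1 + ∑ m, w m * ξ m) * (1 + ∑ m, v m * ξ m))
          ≤ |ξ i| * |(∑ m, v m * ξ m) - ∑ m, w m * ξ m| / (1 - β) ^ 2 :=
            div_le_div_of_nonneg_left (by positivity) (by positivity) hden2
        _ ≤ (∑ m, |v m - w m| * |ξ i * ξ m|) / (1 - β) ^ 2 := by
            gcongr
            have h1 : ∑ m, (v m - w m) * ξ m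
                = (∑ m, v m * ξ m) - ∑ m, w m * ξ m := by
              rw [← Finset.sum_sub_distrib]
              exact Finset.sum_congr rfl fun m _ => by ring
            rw [show (∑ m, v m * ξ m) - ∑ m, w m * ξ m
                = ∑ m, (v m - w m) * ξ m from h1.symm]
            calc |ξ i| * |∑ m, (v m - w m) * ξ m|
                ≤ |ξ i| * ∑ m, |(v m - w m) * ξ m| :=
                  mul_le_mul_of_nonneg_left (Finset.abs_sum_le_sum_abs _ _) (abs_nonneg _)
              _ = ∑ m, |v m - w m| * |ξ i * ξ m| := by
                  rw [Finset.mul_sum]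
                  exact Finset.sum_congr rfl fun m _ => by
                    rw [abs_mul, abs_mul]
                    ring
  -- assemble
  have hterm : ∀ i, ((∫ ξ, (-(ξ i) / (1 + ∑ m, v m * ξ m)) ∂μ)
      - ∫ ξ, (-(ξ i) / (1 + ∑ m, w m * ξ m)) ∂μ) ^ 2
      ≤ (s i * (K * Real.sqrt M) / (1 - β) ^ 2) ^ 2 := by
    intro i
    rw [← sq_abs]
    exact pow_le_pow_left₀ (abs_nonneg _) (hcomp i) 2
  calc Real.sqrt (∑ i, ((∫ ξ, (-(ξ i) / (1 + ∑ m, v m * ξ m)) ∂μ)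
        - ∫ ξ, (-(ξ i) / (1 + ∑ m, w m * ξ m)) ∂μ) ^ 2)
      ≤ Real.sqrt (∑ i, (s i * (K * Real.sqrt M) / (1 - β) ^ 2) ^ 2) :=
        Real.sqrt_le_sqrt (Finset.sum_le_sum fun i _ => hterm i)
    _ = Real.sqrt (∑ i, (K * Real.sqrt M / (1 - β) ^ 2 * s i) ^ 2) := by
        congr 1
        exact Finset.sum_congr rfl fun i _ => by ring
    _ = |K * Real.sqrt M / (1 - β) ^ 2| * Real.sqrt (∑ i, s i ^ 2) :=
        l2_smul Finset.univ _ _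
    _ = M / (1 - β) ^ 2 * K := by
        rw [abs_of_nonneg (by positivity), hsums]
        calc K * Real.sqrt M / (1 - β) ^ 2 * Real.sqrt M
            = K * (Real.sqrt M * Real.sqrt M) / (1 - β) ^ 2 := by ring
          _ = M / (1 - β) ^ 2 * K := by rw [Real.mul_self_sqrt hM0]; ring

end MeasureSide

lemma sqrt_add_le (x y : ℝ) (hx : 0 ≤ x) (hy : 0 ≤ y) :
    Real.sqrt (x + y) ≤ Real.sqrt x + Real.sqrt y :=
  sqrt_le' (by nlinarith [Real.sq_sqrt hx, Real.sq_sqrt hy,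
    Real.sqrt_nonneg x, Real.sqrt_nonneg y]) (by positivity)

lemma add_sqrt_le (x y : ℝ) (hx : 0 ≤ x) (hy : 0 ≤ y) :
    Real.sqrt x + Real.sqrt y ≤ Real.sqrt 2 * Real.sqrt (x + y) := by
  calc Real.sqrt x + Real.sqrt y
      = Real.sqrt ((Real.sqrt x + Real.sqrt y) ^ 2) := (Real.sqrt_sq (by positivity)).symm
    _ ≤ Real.sqrt (2 * (x + y)) := Real.sqrt_le_sqrt (by
        nlinarith [sq_nonneg (Real.sqrt x - Real.sqrt y), Real.sq_sqrt hx, Real.sq_sqrt hy])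
    _ = Real.sqrt 2 * Real.sqrt (x + y) := Real.sqrt_mul (by norm_num) _

lemma monoG {d n : ℕ} (Q : Fin n → Measure (Fin d → ℝ))
    (hQ : ∀ j, IsProbabilityMeasure (Q j))
    {β lam : ℝ} (hβ0 : 0 ≤ β) (hβ1 : β < 1) (hlam : 0 < lam)
    (hInt : ∀ j, Integrable (fun ξ : Fin d → ℝ => ∑ i, (ξ i) ^ 2) (Q j))
    (θ : (Fin d → ℝ) → Fin n → ℝ) (φ : (Fin d → ℝ) → Fin n → ℝ)
    (hφ : ∀ v : Fin d → ℝ, ∀ j, φ v j = ∫ ξ, -Real.log (1 + ∑ i, v i * ξ i) ∂(Q j))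
    (hθnn : ∀ v j, 0 ≤ θ v j)
    (hopt : ∀ a b : Fin d → ℝ, (∑ j, θ b j * φ a j) - lam * ∑ j, θ b j ^ 2
        ≤ (∑ j, θ a j * φ a j) - lam * ∑ j, θ a j ^ 2)
    {v w : Fin d → ℝ} (hv1 : ∀ m, 0 ≤ v m) (hv2 : ∑ m, v m ≤ 1)
    (hw1 : ∀ m, 0 ≤ w m) (hw2 : ∑ m, w m ≤ 1)
    (hvae : ∀ j, ∀ᵐ ξ ∂(Q j), -β ≤ ∑ i, v i * ξ i)
    (hwae : ∀ j, ∀ᵐ ξ ∂(Q j), -β ≤ ∑ i, w i * ξ i) :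
    0 ≤ ∑ i, ((∑ j, θ v j * ∫ ξ, (-(ξ i) / (1 + ∑ m, v m * ξ m)) ∂(Q j))
        - ∑ j, θ w j * ∫ ξ, (-(ξ i) / (1 + ∑ m, w m * ξ m)) ∂(Q j)) * (v i - w i) := by
  -- gradient inequalities
  have hg1 : ∀ j, ∑ i, (∫ ξ, (-(ξ i) / (1 + ∑ m, v m * ξ m)) ∂(Q j)) * (w i - v i)
      ≤ φ w j - φ v j := by
    intro j
    haveI := hQ j
    have := grad_ineq (μ := Q j) (hInt j) hβ0 hβ1 hv1 hv2 hw1 hw2 (hvae j) (hwae j)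
    rw [hφ w j, hφ v j]
    exact this
  have hg2 : ∀ j, ∑ i, (∫ ξ, (-(ξ i) / (1 + ∑ m, w m * ξ m)) ∂(Q j)) * (v i - w i)
      ≤ φ v j - φ w j := by
    intro j
    haveI := hQ j
    have := grad_ineq (μ := Q j) (hInt j) hβ0 hβ1 hw1 hw2 hv1 hv2 (hwae j) (hvae j)
    rw [hφ v j, hφ w j]
    exact this
  -- swap sums
  have hswap : ∀ (u : Fin d → ℝ) (c : Fin d → ℝ),
      ∑ i, (∑ j, θ u j * ∫ ξ, (-(ξ i) / (1 + ∑ m, u m * ξ m)) ∂(Q j)) * c i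
        = ∑ j, θ u j * ∑ i, (∫ ξ, (-(ξ i) / (1 + ∑ m, u m * ξ m)) ∂(Q j)) * c i := by
    intro u c
    calc ∑ i, (∑ j, θ u j * ∫ ξ, (-(ξ i) / (1 + ∑ m, u m * ξ m)) ∂(Q j)) * c i
        = ∑ i, ∑ j, θ u j * ((∫ ξ, (-(ξ i) / (1 + ∑ m, u m * ξ m)) ∂(Q j)) * c i) := by
          refine Finset.sum_congr rfl fun i _ => ?_
          rw [Finset.sum_mul]
          exact Finset.sum_congr rfl fun j _ => by ring
      _ = ∑ j, ∑ i, θ u j * ((∫ ξ, (-(ξ i) / (1 + ∑ m, u m * ξ m)) ∂(Q j)) * c i) :=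
          Finset.sum_comm
      _ = ∑ j, θ u j * ∑ i, (∫ ξ, (-(ξ i) / (1 + ∑ m, u m * ξ m)) ∂(Q j)) * c i := by
          refine Finset.sum_congr rfl fun j _ => ?_
          rw [Finset.mul_sum]
  have hub_v : ∑ i, (∑ j, θ v j * ∫ ξ, (-(ξ i) / (1 + ∑ m, v m * ξ m)) ∂(Q j)) * (w i - v i)
      ≤ ∑ j, θ v j * (φ w j - φ v j) := by
    rw [hswap v (fun i => w i - v i)]
    exact Finset.sum_le_sum fun j _ =>
      mul_le_mul_of_nonneg_left (hg1 j) (hθnn v j)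
  have hub_w : ∑ i, (∑ j, θ w j * ∫ ξ, (-(ξ i) / (1 + ∑ m, w m * ξ m)) ∂(Q j)) * (v i - w i)
      ≤ ∑ j, θ w j * (φ v j - φ w j) := by
    rw [hswap w (fun i => v i - w i)]
    exact Finset.sum_le_sum fun j _ =>
      mul_le_mul_of_nonneg_left (hg2 j) (hθnn w j)
  -- distribute
  have edist : ∀ (q f g : Fin n → ℝ), ∑ j, q j * (f j - g j)
      = (∑ j, q j * f j) - ∑ j, q j * g j := by
    intro q f g
    rw [← Finset.sum_sub_distrib]
    exact Finset.sum_congr rfl fun j _ => by ring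
  have hO1 := hopt v w
  have hO2 := hopt w v
  have hsplit : ∑ i, ((∑ j, θ v j * ∫ ξ, (-(ξ i) / (1 + ∑ m, v m * ξ m)) ∂(Q j))
        - ∑ j, θ w j * ∫ ξ, (-(ξ i) / (1 + ∑ m, w m * ξ m)) ∂(Q j)) * (v i - w i)
      = -(∑ i, (∑ j, θ v j * ∫ ξ, (-(ξ i) / (1 + ∑ m, v m * ξ m)) ∂(Q j)) * (w i - v i))
        - ∑ i, (∑ j, θ w j * ∫ ξ, (-(ξ i) / (1 + ∑ m, w m * ξ m)) ∂(Q j)) * (v i - w i) := by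
    rw [← Finset.sum_neg_distrib, ← Finset.sum_sub_distrib]
    exact Finset.sum_congr rfl fun i _ => by ring
  rw [hsplit]
  rw [edist (θ v) (φ w) (φ v)] at hub_v
  rw [edist (θ w) (φ v) (φ w)] at hub_w
  linarith

lemma lipG {d n : ℕ} (Q : Fin n → Measure (Fin d → ℝ))
    (hQ : ∀ j, IsProbabilityMeasure (Q j))
    {β lam S : ℝ} (hβ0 : 0 ≤ β) (hβ1 : β < 1) (hlam : 0 < lam)
    (hn : 1 ≤ n) (hS0 : 0 ≤ S)
    (hInt : ∀ j, Integrable (fun ξ : Fin d → ℝ => ∑ i, (ξ i) ^ 2) (Q j))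
    (hS : ∀ j, (∫ ξ, ∑ i, ξ i ^ 2 ∂(Q j)) ≤ S)
    (θ φ : (Fin d → ℝ) → Fin n → ℝ)
    (hφ : ∀ v : Fin d → ℝ, ∀ j, φ v j = ∫ ξ, -Real.log (1 + ∑ i, v i * ξ i) ∂(Q j))
    (hθnn : ∀ v j, 0 ≤ θ v j) (hθsum : ∀ v, ∑ j, θ v j = 1)
    (hθlip : ∀ v w : Fin d → ℝ, Real.sqrt (∑ j, (θ v j - θ w j) ^ 2)
        ≤ (1 / (2 * lam)) * Real.sqrt (∑ j, (φ v j - φ w j) ^ 2))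
    {v w : Fin d → ℝ} (hv1 : ∀ m, 0 ≤ v m) (hv2 : ∑ m, v m ≤ 1)
    (hw1 : ∀ m, 0 ≤ w m) (hw2 : ∑ m, w m ≤ 1)
    (hvae : ∀ j, ∀ᵐ ξ ∂(Q j), -β ≤ ∑ i, v i * ξ i)
    (hwae : ∀ j, ∀ᵐ ξ ∂(Q j), -β ≤ ∑ i, w i * ξ i) :
    Real.sqrt (∑ i, ((∑ j, θ v j * ∫ ξ, (-(ξ i) / (1 + ∑ m, v m * ξ m)) ∂(Q j))
        - ∑ j, θ w j * ∫ ξ, (-(ξ i) / (1 + ∑ m, w m * ξ m)) ∂(Q j)) ^ 2)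
      ≤ (1 + 1 / (2 * lam)) * ((n : ℝ) * S / (1 - β) ^ 2)
          * Real.sqrt (∑ i, (v i - w i) ^ 2) := by
  have hc : (0:ℝ) < 1 - β := by linarith
  set cβ := (1:ℝ) - β with hcβ
  set K := Real.sqrt (∑ i, (v i - w i) ^ 2) with hK
  have hK0 : 0 ≤ K := Real.sqrt_nonneg _
  have hAi : ∀ i, (∑ j, θ v j * ∫ ξ, (-(ξ i) / (1 + ∑ m, v m * ξ m)) ∂(Q j))
      - ∑ j, θ w j * ∫ ξ, (-(ξ i) / (1 + ∑ m, w m * ξ m)) ∂(Q j)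
      = (∑ j, (θ v j * ((∫ ξ, (-(ξ i) / (1 + ∑ m, v m * ξ m)) ∂(Q j))
            - ∫ ξ, (-(ξ i) / (1 + ∑ m, w m * ξ m)) ∂(Q j))
          + (θ v j - θ w j) * (∫ ξ, (-(ξ i) / (1 + ∑ m, w m * ξ m)) ∂(Q j)))) := by
    intro i
    rw [← Finset.sum_sub_distrib]
    exact Finset.sum_congr rfl fun j _ => by ring
  -- T1 bound
  have hgv : ∀ j, Real.sqrt (∑ i, ((∫ ξ, (-(ξ i) / (1 + ∑ m, v m * ξ m)) ∂(Q j))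
        - ∫ ξ, (-(ξ i) / (1 + ∑ m, w m * ξ m)) ∂(Q j)) ^ 2)
      ≤ S / (1 - β) ^ 2 * K := by
    intro j
    haveI := hQ j
    have h := gvec_lip (μ := Q j) (hInt j) hβ1 (hvae j) (hwae j)
    refine h.trans ?_
    gcongr
    exact hS j
  have hT1 : Real.sqrt (∑ i, (∑ j, θ v j * ((∫ ξ, (-(ξ i) / (1 + ∑ m, v m * ξ m)) ∂(Q j))
        - ∫ ξ, (-(ξ i) / (1 + ∑ m, w m * ξ m)) ∂(Q j))) ^ 2)
      ≤ S / (1 - β) ^ 2 * K := by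
    calc Real.sqrt (∑ i, (∑ j, θ v j * ((∫ ξ, (-(ξ i) / (1 + ∑ m, v m * ξ m)) ∂(Q j))
          - ∫ ξ, (-(ξ i) / (1 + ∑ m, w m * ξ m)) ∂(Q j))) ^ 2)
        ≤ ∑ j, Real.sqrt (∑ i, (θ v j * ((∫ ξ, (-(ξ i) / (1 + ∑ m, v m * ξ m)) ∂(Q j))
            - ∫ ξ, (-(ξ i) / (1 + ∑ m, w m * ξ m)) ∂(Q j))) ^ 2) :=
          l2_sum Finset.univ Finset.univ _
      _ = ∑ j, θ v j * Real.sqrt (∑ i, ((∫ ξ, (-(ξ i) / (1 + ∑ m, v m * ξ m)) ∂(Q j))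
            - ∫ ξ, (-(ξ i) / (1 + ∑ m, w m * ξ m)) ∂(Q j)) ^ 2) := by
          refine Finset.sum_congr rfl fun j _ => ?_
          rw [l2_smul, abs_of_nonneg (hθnn v j)]
      _ ≤ ∑ j, θ v j * (S / (1 - β) ^ 2 * K) :=
          Finset.sum_le_sum fun j _ => mul_le_mul_of_nonneg_left (hgv j) (hθnn v j)
      _ = S / (1 - β) ^ 2 * K := by rw [← Finset.sum_mul, hθsum v, one_mul]
  -- T2 bound
  have hBnorm : ∀ j, Real.sqrt (∑ i, (∫ ξ, (-(ξ i) / (1 + ∑ m, w m * ξ m)) ∂(Q j)) ^ 2)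
      ≤ Real.sqrt S / (1 - β) := by
    intro j
    haveI := hQ j
    refine (gnorm (hInt j) hβ1 (hwae j)).trans ?_
    gcongr
    exact hS j
  have hφdiff : ∀ j, |φ v j - φ w j| ≤ Real.sqrt S / (1 - β) * K := by
    intro j
    haveI := hQ j
    have h := philip (μ := Q j) (hInt j) hβ0 hβ1 hw1 hw2 hv1 hv2 (hwae j) (hvae j)
    rw [hφ v j, hφ w j]
    refine h.trans ?_
    gcongr
    exact hS j
  have hφvec : Real.sqrt (∑ j, (φ v j - φ w j) ^ 2)
      ≤ Real.sqrt n * (Real.sqrt S / (1 - β)) * K := by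
    refine sqrt_le' ?_ (by positivity)
    calc ∑ j, (φ v j - φ w j) ^ 2
        ≤ ∑ j : Fin n, (Real.sqrt S / (1 - β) * K) ^ 2 :=
          Finset.sum_le_sum fun j _ => by
            rw [← sq_abs]
            exact pow_le_pow_left₀ (abs_nonneg _) (hφdiff j) 2
      _ = (n : ℝ) * (Real.sqrt S / (1 - β) * K) ^ 2 := by
          rw [Finset.sum_const, Finset.card_univ, Fintype.card_fin, nsmul_eq_mul]
      _ = (Real.sqrt n * (Real.sqrt S / (1 - β)) * K) ^ 2 := by
          rw [show (Real.sqrt n * (Real.sqrt S / (1 - β)) * K) ^ 2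
            = Real.sqrt (n:ℝ) ^ 2 * (Real.sqrt S / (1 - β) * K) ^ 2 by ring,
            Real.sq_sqrt (Nat.cast_nonneg n)]
  have hθvec : Real.sqrt (∑ j, (θ v j - θ w j) ^ 2)
      ≤ 1 / (2 * lam) * (Real.sqrt n * (Real.sqrt S / (1 - β)) * K) :=
    (hθlip v w).trans (mul_le_mul_of_nonneg_left hφvec (by positivity))
  have habssum : ∑ j, |θ v j - θ w j|
      ≤ Real.sqrt n * Real.sqrt (∑ j, (θ v j - θ w j) ^ 2) := by
    have h := Real.sum_mul_le_sqrt_mul_sqrt Finset.univ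
      (fun j => |θ v j - θ w j|) (fun _ => (1:ℝ))
    have e1 : ∑ j, |θ v j - θ w j| * (1:ℝ) = ∑ j, |θ v j - θ w j| := by simp
    have e2 : ∑ j : Fin n, |θ v j - θ w j| ^ 2 = ∑ j, (θ v j - θ w j) ^ 2 :=
      Finset.sum_congr rfl fun j _ => sq_abs _
    have e3 : ∑ _j : Fin n, ((1:ℝ)) ^ 2 = (n : ℝ) := by
      rw [Finset.sum_const, Finset.card_univ, Fintype.card_fin, nsmul_eq_mul]
      norm_num
    rw [e1, e2, e3] at h
    calc ∑ j, |θ v j - θ w j| ≤ Real.sqrt (∑ j, (θ v j - θ w j) ^ 2) * Real.sqrt n := h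
      _ = Real.sqrt n * Real.sqrt (∑ j, (θ v j - θ w j) ^ 2) := by ring
  have hT2 : Real.sqrt (∑ i, (∑ j, (θ v j - θ w j)
        * (∫ ξ, (-(ξ i) / (1 + ∑ m, w m * ξ m)) ∂(Q j))) ^ 2)
      ≤ (n : ℝ) * S / (1 - β) ^ 2 / (2 * lam) * K := by
    have e1 : Real.sqrt (n:ℝ) * Real.sqrt (n:ℝ) = (n:ℝ) :=
      Real.mul_self_sqrt (Nat.cast_nonneg n)
    have e2 : Real.sqrt S * Real.sqrt S = S := Real.mul_self_sqrt hS0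
    calc Real.sqrt (∑ i, (∑ j, (θ v j - θ w j)
          * (∫ ξ, (-(ξ i) / (1 + ∑ m, w m * ξ m)) ∂(Q j))) ^ 2)
        ≤ ∑ j, Real.sqrt (∑ i, ((θ v j - θ w j)
            * (∫ ξ, (-(ξ i) / (1 + ∑ m, w m * ξ m)) ∂(Q j))) ^ 2) :=
          l2_sum Finset.univ Finset.univ _
      _ = ∑ j, |θ v j - θ w j| * Real.sqrt (∑ i,
            (∫ ξ, (-(ξ i) / (1 + ∑ m, w m * ξ m)) ∂(Q j)) ^ 2) := by
          refine Finset.sum_congr rfl fun j _ => ?_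
          rw [l2_smul]
      _ ≤ ∑ j, |θ v j - θ w j| * (Real.sqrt S / (1 - β)) :=
          Finset.sum_le_sum fun j _ =>
            mul_le_mul_of_nonneg_left (hBnorm j) (abs_nonneg _)
      _ = (∑ j, |θ v j - θ w j|) * (Real.sqrt S / (1 - β)) := by
          rw [Finset.sum_mul]
      _ ≤ (Real.sqrt n * Real.sqrt (∑ j, (θ v j - θ w j) ^ 2))
            * (Real.sqrt S / (1 - β)) :=
          mul_le_mul_of_nonneg_right habssum (by positivity)
      _ ≤ (Real.sqrt n * (1 / (2 * lam) * (Real.sqrt n * (Real.sqrt S / (1 - β)) * K)))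
            * (Real.sqrt S / (1 - β)) := by
          refine mul_le_mul_of_nonneg_right ?_ (by positivity)
          exact mul_le_mul_of_nonneg_left hθvec (Real.sqrt_nonneg _)
      _ = (n : ℝ) * S / (1 - β) ^ 2 / (2 * lam) * K := by
          generalize (1:ℝ) - β = c
          conv_rhs => rw [← e1, ← e2]
          ring
  -- combine
  have hrw : ∑ i, ((∑ j, θ v j * ∫ ξ, (-(ξ i) / (1 + ∑ m, v m * ξ m)) ∂(Q j))
        - ∑ j, θ w j * ∫ ξ, (-(ξ i) / (1 + ∑ m, w m * ξ m)) ∂(Q j)) ^ 2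
      = ∑ i, ((∑ j, θ v j * ((∫ ξ, (-(ξ i) / (1 + ∑ m, v m * ξ m)) ∂(Q j))
            - ∫ ξ, (-(ξ i) / (1 + ∑ m, w m * ξ m)) ∂(Q j)))
          + ∑ j, (θ v j - θ w j) * (∫ ξ, (-(ξ i) / (1 + ∑ m, w m * ξ m)) ∂(Q j))) ^ 2 := by
    refine Finset.sum_congr rfl fun i _ => ?_
    rw [hAi i, Finset.sum_add_distrib]
  rw [hrw]
  have htri := l2_triangle Finset.univ
    (fun i => ∑ j, θ v j * ((∫ ξ, (-(ξ i) / (1 + ∑ m, v m * ξ m)) ∂(Q j))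
        - ∫ ξ, (-(ξ i) / (1 + ∑ m, w m * ξ m)) ∂(Q j)))
    (fun i => ∑ j, (θ v j - θ w j) * (∫ ξ, (-(ξ i) / (1 + ∑ m, w m * ξ m)) ∂(Q j)))
  refine htri.trans ?_
  have hmono : S / (1 - β) ^ 2 * K ≤ (n : ℝ) * S / (1 - β) ^ 2 * K := by
    refine mul_le_mul_of_nonneg_right ?_ hK0
    gcongr
    exact le_mul_of_one_le_left hS0 (by exact_mod_cast hn)
  have hfinal : (1 + 1 / (2 * lam)) * ((n : ℝ) * S / (1 - β) ^ 2) * K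
      = (n : ℝ) * S / (1 - β) ^ 2 * K + (n : ℝ) * S / (1 - β) ^ 2 / (2 * lam) * K := by
    ring
  linarith [hT1, hT2]

end P51

/-- Proposition 5.1: the reduced operator `F` of the regularized Bayesian DRVI arising
from the two-account distributionally robust multi-portfolio Nash equilibrium problem
with logarithmic disutility is monotone and Lipschitz continuous on 𝒳 × 𝒳 with modulus
`L_F = (√2 + √2/(2λ)) · n · (max_j σ̄_j²)/(1−β)² + 2√2·κ`.
Here `θ*(v)` is the Euclidean metric projection of `φⁿ(v)/(2λ)` onto `Θ̂`, monotonicity is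
stated with the standard inner product of ℝ^d × ℝ^d, and the Lipschitz estimate with the
Euclidean norm of the product. -/
theorem F_monotone_lipschitz
    (d n : ℕ) (hd : 1 ≤ d) (hn : 1 ≤ n)
    (lam κ β : ℝ) (hlam : 0 < lam) (hκ : 0 < κ) (hβ : β ∈ Set.Ico (0 : ℝ) 1)
    (Q : Fin n → Measure (Fin d → ℝ)) (hQ : ∀ j, IsProbabilityMeasure (Q j))
    (σ2 : Fin n → ℝ)
    (hsupp : ∀ j, ∀ x ∈ portfolioSet d, ∀ᵐ ξ ∂(Q j), -β ≤ ∑ i, x i * ξ i)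
    (hInt : ∀ j, Integrable (fun ξ => ∑ i, (ξ i) ^ 2) (Q j))
    (hmom : ∀ j, (∫ ξ, (∑ i, (ξ i) ^ 2) ∂(Q j)) ≤ σ2 j)
    (Θhat : Set (Fin n → ℝ)) (hne : Θhat.Nonempty) (hcomp : IsCompact Θhat)
    (hconv : Convex ℝ Θhat) (hsub : Θhat ⊆ simplex n)
    (φn : (Fin d → ℝ) → Fin n → ℝ)
    (hφn : ∀ x : Fin d → ℝ,
      φn x = fun j => ∫ ξ, -Real.log (1 + ∑ i, x i * ξ i) ∂(Q j))
    (θstar : (Fin d → ℝ) → Fin n → ℝ)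
    (hθ1 : ∀ x : Fin d → ℝ, θstar x ∈ Θhat)
    (hθ2 : ∀ x : Fin d → ℝ, ∀ u ∈ Θhat,
      Real.sqrt (∑ j, (θstar x j - φn x j / (2 * lam)) ^ 2)
        ≤ Real.sqrt (∑ j, (u j - φn x j / (2 * lam)) ^ 2))
    (F : (Fin d → ℝ) × (Fin d → ℝ) → (Fin d → ℝ) × (Fin d → ℝ))
    (hF : ∀ x : (Fin d → ℝ) × (Fin d → ℝ),
      F x = (fun i => (∑ j, θstar x.1 j * ∫ ξ, (-(ξ i) / (1 + ∑ m, x.1 m * ξ m)) ∂(Q j))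
                + κ * (x.1 i - x.2 i),
             fun i => (∑ j, θstar x.2 j * ∫ ξ, (-(ξ i) / (1 + ∑ m, x.2 m * ξ m)) ∂(Q j))
                + κ * (x.2 i - x.1 i))) :
    (∀ x y : (Fin d → ℝ) × (Fin d → ℝ),
      x.1 ∈ portfolioSet d → x.2 ∈ portfolioSet d →
      y.1 ∈ portfolioSet d → y.2 ∈ portfolioSet d →
      0 ≤ (∑ i, ((F x).1 i - (F y).1 i) * (x.1 i - y.1 i))
          + ∑ i, ((F x).2 i - (F y).2 i) * (x.2 i - y.2 i)) ∧
    (∀ x y : (Fin d → ℝ) × (Fin d → ℝ),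
      x.1 ∈ portfolioSet d → x.2 ∈ portfolioSet d →
      y.1 ∈ portfolioSet d → y.2 ∈ portfolioSet d →
      Real.sqrt ((∑ i, ((F x).1 i - (F y).1 i) ^ 2) + ∑ i, ((F x).2 i - (F y).2 i) ^ 2)
        ≤ ((Real.sqrt 2 + Real.sqrt 2 / (2 * lam)) * ((n : ℝ) * (⨆ j, σ2 j) / (1 - β) ^ 2)
            + 2 * Real.sqrt 2 * κ)
          * Real.sqrt ((∑ i, (x.1 i - y.1 i) ^ 2) + ∑ i, (x.2 i - y.2 i) ^ 2)) := by
  obtain ⟨hβ0, hβ1⟩ := hβ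
  have hθmem : ∀ v : Fin d → ℝ, θstar v ∈ simplex n := fun v => hsub (hθ1 v)
  have hθsum : ∀ v : Fin d → ℝ, ∑ j, θstar v j = 1 := fun v => (hθmem v).1
  have hθnn : ∀ (v : Fin d → ℝ) (j : Fin n), 0 ≤ θstar v j := fun v j => (hθmem v).2 j
  have hφ' : ∀ v : Fin d → ℝ, ∀ j, φn v j
      = ∫ ξ, -Real.log (1 + ∑ i, v i * ξ i) ∂(Q j) := fun v j => by rw [hφn v]
  have hθ2sq : ∀ v : Fin d → ℝ, ∀ u ∈ Θhat,
      ∑ j, (θstar v j - φn v j / (2 * lam)) ^ 2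
        ≤ ∑ j, (u j - φn v j / (2 * lam)) ^ 2 :=
    fun v u hu => (Real.sqrt_le_sqrt_iff (Finset.sum_nonneg fun j _ => sq_nonneg _)).mp
      (hθ2 v u hu)
  have hopt : ∀ a b : Fin d → ℝ,
      (∑ j, θstar b j * φn a j) - lam * ∑ j, θstar b j ^ 2
        ≤ (∑ j, θstar a j * φn a j) - lam * ∑ j, θstar a j ^ 2 := by
    intro a b
    have h := P51.proj_opt (θstar a) (θstar b) (fun j => φn a j / (2 * lam))
      (hθ2sq a (θstar b) (hθ1 b))
    have e : ∀ q : Fin n → ℝ,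
        lam * (∑ j, q j * (2 * (φn a j / (2 * lam)))) = ∑ j, q j * φn a j := by
      intro q
      rw [Finset.mul_sum]
      refine Finset.sum_congr rfl fun j _ => ?_
      field_simp
    have h2 := mul_le_mul_of_nonneg_left h hlam.le
    have hra : lam * ((∑ j, θstar a j * (2 * (φn a j / (2 * lam)))) - ∑ j, θstar a j ^ 2)
        = lam * (∑ j, θstar a j * (2 * (φn a j / (2 * lam))))
          - lam * ∑ j, θstar a j ^ 2 := by ring
    have hrb : lam * ((∑ j, θstar b j * (2 * (φn a j / (2 * lam)))) - ∑ j, θstar b j ^ 2)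
        = lam * (∑ j, θstar b j * (2 * (φn a j / (2 * lam))))
          - lam * ∑ j, θstar b j ^ 2 := by ring
    have ea := e (θstar a)
    have eb := e (θstar b)
    linarith
  have hθlip : ∀ v w : Fin d → ℝ,
      Real.sqrt (∑ j, (θstar v j - θstar w j) ^ 2)
        ≤ (1 / (2 * lam)) * Real.sqrt (∑ j, (φn v j - φn w j) ^ 2) := by
    intro v w
    have h := P51.proj_nonexpansive (C := Θhat) hconv (hθ1 v) (hθ1 w)
      (fun z hz => hθ2sq v z hz) (fun z hz => hθ2sq w z hz)
    refine h.trans (le_of_eq ?_)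
    have e : ∀ j : Fin n, (φn v j / (2 * lam) - φn w j / (2 * lam)) ^ 2
        = (1 / (2 * lam) * (φn v j - φn w j)) ^ 2 := fun j => by ring
    rw [Finset.sum_congr rfl fun j _ => e j, P51.l2_smul Finset.univ (1 / (2 * lam)) _,
      abs_of_pos (by positivity)]
  set S := ⨆ j, σ2 j with hSdef
  have hbdd : BddAbove (Set.range σ2) := (Set.finite_range σ2).bddAbove
  have hSle : ∀ j, σ2 j ≤ S := fun j => le_ciSup hbdd j
  have hS : ∀ j, (∫ ξ, ∑ i, ξ i ^ 2 ∂(Q j)) ≤ S := fun j => (hmom j).trans (hSle j)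
  have hS0 : 0 ≤ S :=
    (integral_nonneg fun ξ => Finset.sum_nonneg fun i _ => sq_nonneg _).trans
      (hS ⟨0, hn⟩)
  constructor
  · -- monotonicity
    intro x y hx1 hx2 hy1 hy2
    have hF1 : ∀ i, (F x).1 i - (F y).1 i
        = ((∑ j, θstar x.1 j * ∫ ξ, (-(ξ i) / (1 + ∑ m, x.1 m * ξ m)) ∂(Q j))
            - ∑ j, θstar y.1 j * ∫ ξ, (-(ξ i) / (1 + ∑ m, y.1 m * ξ m)) ∂(Q j))
          + κ * ((x.1 i - y.1 i) - (x.2 i - y.2 i)) := by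
      intro i
      simp only [hF]
      ring
    have hF2 : ∀ i, (F x).2 i - (F y).2 i
        = ((∑ j, θstar x.2 j * ∫ ξ, (-(ξ i) / (1 + ∑ m, x.2 m * ξ m)) ∂(Q j))
            - ∑ j, θstar y.2 j * ∫ ξ, (-(ξ i) / (1 + ∑ m, y.2 m * ξ m)) ∂(Q j))
          + κ * ((x.2 i - y.2 i) - (x.1 i - y.1 i)) := by
      intro i
      simp only [hF]
      ring
    have e1 : ∑ i, ((F x).1 i - (F y).1 i) * (x.1 i - y.1 i)
        = (∑ i, ((∑ j, θstar x.1 j * ∫ ξ, (-(ξ i) / (1 + ∑ m, x.1 m * ξ m)) ∂(Q j))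
            - ∑ j, θstar y.1 j * ∫ ξ, (-(ξ i) / (1 + ∑ m, y.1 m * ξ m)) ∂(Q j))
              * (x.1 i - y.1 i))
          + κ * ∑ i, ((x.1 i - y.1 i) - (x.2 i - y.2 i)) * (x.1 i - y.1 i) := by
      rw [Finset.mul_sum, ← Finset.sum_add_distrib]
      exact Finset.sum_congr rfl fun i _ => by rw [hF1 i]; ring
    have e2 : ∑ i, ((F x).2 i - (F y).2 i) * (x.2 i - y.2 i)
        = (∑ i, ((∑ j, θstar x.2 j * ∫ ξ, (-(ξ i) / (1 + ∑ m, x.2 m * ξ m)) ∂(Q j))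
            - ∑ j, θstar y.2 j * ∫ ξ, (-(ξ i) / (1 + ∑ m, y.2 m * ξ m)) ∂(Q j))
              * (x.2 i - y.2 i))
          + κ * ∑ i, ((x.2 i - y.2 i) - (x.1 i - y.1 i)) * (x.2 i - y.2 i) := by
      rw [Finset.mul_sum, ← Finset.sum_add_distrib]
      exact Finset.sum_congr rfl fun i _ => by rw [hF2 i]; ring
    have hM1 := P51.monoG Q hQ hβ0 hβ1 hlam hInt θstar φn hφ' hθnn hopt
      hx1.1 hx1.2 hy1.1 hy1.2 (fun j => hsupp j x.1 hx1) (fun j => hsupp j y.1 hy1)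
    have hM2 := P51.monoG Q hQ hβ0 hβ1 hlam hInt θstar φn hφ' hθnn hopt
      hx2.1 hx2.2 hy2.1 hy2.2 (fun j => hsupp j x.2 hx2) (fun j => hsupp j y.2 hy2)
    have hcross : (∑ i, ((x.1 i - y.1 i) - (x.2 i - y.2 i)) * (x.1 i - y.1 i))
        + ∑ i, ((x.2 i - y.2 i) - (x.1 i - y.1 i)) * (x.2 i - y.2 i)
        = ∑ i, ((x.1 i - y.1 i) - (x.2 i - y.2 i)) ^ 2 := by
      rw [← Finset.sum_add_distrib]
      exact Finset.sum_congr rfl fun i _ => by ring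
    have hsq : 0 ≤ κ * ∑ i, ((x.1 i - y.1 i) - (x.2 i - y.2 i)) ^ 2 :=
      mul_nonneg hκ.le (Finset.sum_nonneg fun i _ => sq_nonneg _)
    have etotal : (∑ i, ((F x).1 i - (F y).1 i) * (x.1 i - y.1 i))
        + ∑ i, ((F x).2 i - (F y).2 i) * (x.2 i - y.2 i)
        = (∑ i, ((∑ j, θstar x.1 j * ∫ ξ, (-(ξ i) / (1 + ∑ m, x.1 m * ξ m)) ∂(Q j))
            - ∑ j, θstar y.1 j * ∫ ξ, (-(ξ i) / (1 + ∑ m, y.1 m * ξ m)) ∂(Q j))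
              * (x.1 i - y.1 i))
          + (∑ i, ((∑ j, θstar x.2 j * ∫ ξ, (-(ξ i) / (1 + ∑ m, x.2 m * ξ m)) ∂(Q j))
            - ∑ j, θstar y.2 j * ∫ ξ, (-(ξ i) / (1 + ∑ m, y.2 m * ξ m)) ∂(Q j))
              * (x.2 i - y.2 i))
          + κ * ∑ i, ((x.1 i - y.1 i) - (x.2 i - y.2 i)) ^ 2 := by
      rw [e1, e2, ← hcross]
      ring
    rw [etotal]
    linarith
  · -- Lipschitz
    intro x y hx1 hx2 hy1 hy2
    have hF1 : ∀ i, (F x).1 i - (F y).1 i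
        = ((∑ j, θstar x.1 j * ∫ ξ, (-(ξ i) / (1 + ∑ m, x.1 m * ξ m)) ∂(Q j))
            - ∑ j, θstar y.1 j * ∫ ξ, (-(ξ i) / (1 + ∑ m, y.1 m * ξ m)) ∂(Q j))
          + κ * ((x.1 i - y.1 i) - (x.2 i - y.2 i)) := by
      intro i
      simp only [hF]
      ring
    have hF2 : ∀ i, (F x).2 i - (F y).2 i
        = ((∑ j, θstar x.2 j * ∫ ξ, (-(ξ i) / (1 + ∑ m, x.2 m * ξ m)) ∂(Q j))
            - ∑ j, θstar y.2 j * ∫ ξ, (-(ξ i) / (1 + ∑ m, y.2 m * ξ m)) ∂(Q j))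
          + κ * ((x.2 i - y.2 i) - (x.1 i - y.1 i)) := by
      intro i
      simp only [hF]
      ring
    have hL1 := P51.lipG Q hQ hβ0 hβ1 hlam hn hS0 hInt hS θstar φn hφ' hθnn hθsum hθlip
      hx1.1 hx1.2 hy1.1 hy1.2 (fun j => hsupp j x.1 hx1) (fun j => hsupp j y.1 hy1)
    have hL2 := P51.lipG Q hQ hβ0 hβ1 hlam hn hS0 hInt hS θstar φn hφ' hθnn hθsum hθlip
      hx2.1 hx2.2 hy2.1 hy2.2 (fun j => hsupp j x.2 hx2) (fun j => hsupp j y.2 hy2)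
    set a1 := Real.sqrt (∑ i, (x.1 i - y.1 i) ^ 2) with ha1
    set a2 := Real.sqrt (∑ i, (x.2 i - y.2 i) ^ 2) with ha2
    have ha10 : 0 ≤ a1 := Real.sqrt_nonneg _
    have ha20 : 0 ≤ a2 := Real.sqrt_nonneg _
    have hδ1 : Real.sqrt (∑ i, ((x.1 i - y.1 i) - (x.2 i - y.2 i)) ^ 2) ≤ a1 + a2 := by
      calc Real.sqrt (∑ i, ((x.1 i - y.1 i) - (x.2 i - y.2 i)) ^ 2)
          = Real.sqrt (∑ i, ((x.1 i - y.1 i) + -(x.2 i - y.2 i)) ^ 2) :=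
            congrArg Real.sqrt (Finset.sum_congr rfl fun i _ => by ring)
        _ ≤ Real.sqrt (∑ i, (x.1 i - y.1 i) ^ 2)
              + Real.sqrt (∑ i, (-(x.2 i - y.2 i)) ^ 2) :=
            P51.l2_triangle Finset.univ _ _
        _ = a1 + a2 := by
            rw [ha1, ha2, show ∑ i, (-(x.2 i - y.2 i)) ^ 2 = ∑ i, (x.2 i - y.2 i) ^ 2
              from Finset.sum_congr rfl fun i _ => by ring]
    have hδ2 : Real.sqrt (∑ i, ((x.2 i - y.2 i) - (x.1 i - y.1 i)) ^ 2) ≤ a1 + a2 := by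
      calc Real.sqrt (∑ i, ((x.2 i - y.2 i) - (x.1 i - y.1 i)) ^ 2)
          = Real.sqrt (∑ i, ((x.2 i - y.2 i) + -(x.1 i - y.1 i)) ^ 2) :=
            congrArg Real.sqrt (Finset.sum_congr rfl fun i _ => by ring)
        _ ≤ Real.sqrt (∑ i, (x.2 i - y.2 i) ^ 2)
              + Real.sqrt (∑ i, (-(x.1 i - y.1 i)) ^ 2) :=
            P51.l2_triangle Finset.univ _ _
        _ = a2 + a1 := by
            rw [ha1, ha2, show ∑ i, (-(x.1 i - y.1 i)) ^ 2 = ∑ i, (x.1 i - y.1 i) ^ 2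
              from Finset.sum_congr rfl fun i _ => by ring]
        _ = a1 + a2 := by ring
    have ht1 : Real.sqrt (∑ i, ((F x).1 i - (F y).1 i) ^ 2)
        ≤ (1 + 1 / (2 * lam)) * ((n : ℝ) * S / (1 - β) ^ 2) * a1 + κ * (a1 + a2) := by
      have hre : ∑ i, ((F x).1 i - (F y).1 i) ^ 2
          = ∑ i, (((∑ j, θstar x.1 j * ∫ ξ, (-(ξ i) / (1 + ∑ m, x.1 m * ξ m)) ∂(Q j))
              - ∑ j, θstar y.1 j * ∫ ξ, (-(ξ i) / (1 + ∑ m, y.1 m * ξ m)) ∂(Q j))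
            + κ * ((x.1 i - y.1 i) - (x.2 i - y.2 i))) ^ 2 :=
        Finset.sum_congr rfl fun i _ => by rw [hF1 i]
      rw [hre]
      refine (P51.l2_triangle Finset.univ _ _).trans ?_
      have hb : Real.sqrt (∑ i, (κ * ((x.1 i - y.1 i) - (x.2 i - y.2 i))) ^ 2)
          = κ * Real.sqrt (∑ i, ((x.1 i - y.1 i) - (x.2 i - y.2 i)) ^ 2) := by
        rw [P51.l2_smul Finset.univ κ _, abs_of_pos hκ]
      rw [hb]
      exact add_le_add hL1 (mul_le_mul_of_nonneg_left hδ1 hκ.le)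
    have ht2 : Real.sqrt (∑ i, ((F x).2 i - (F y).2 i) ^ 2)
        ≤ (1 + 1 / (2 * lam)) * ((n : ℝ) * S / (1 - β) ^ 2) * a2 + κ * (a1 + a2) := by
      have hre : ∑ i, ((F x).2 i - (F y).2 i) ^ 2
          = ∑ i, (((∑ j, θstar x.2 j * ∫ ξ, (-(ξ i) / (1 + ∑ m, x.2 m * ξ m)) ∂(Q j))
              - ∑ j, θstar y.2 j * ∫ ξ, (-(ξ i) / (1 + ∑ m, y.2 m * ξ m)) ∂(Q j))
            + κ * ((x.2 i - y.2 i) - (x.1 i - y.1 i))) ^ 2 :=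
        Finset.sum_congr rfl fun i _ => by rw [hF2 i]
      rw [hre]
      refine (P51.l2_triangle Finset.univ _ _).trans ?_
      have hb : Real.sqrt (∑ i, (κ * ((x.2 i - y.2 i) - (x.1 i - y.1 i))) ^ 2)
          = κ * Real.sqrt (∑ i, ((x.2 i - y.2 i) - (x.1 i - y.1 i)) ^ 2) := by
        rw [P51.l2_smul Finset.univ κ _, abs_of_pos hκ]
      rw [hb]
      exact add_le_add hL2 (mul_le_mul_of_nonneg_left hδ2 hκ.le)
    have hLG0 : 0 ≤ (1 + 1 / (2 * lam)) * ((n : ℝ) * S / (1 - β) ^ 2) :=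
      mul_nonneg (by positivity)
        (div_nonneg (mul_nonneg (Nat.cast_nonneg n) hS0) (by positivity))
    have hsum12 : a1 + a2 ≤ Real.sqrt 2
        * Real.sqrt ((∑ i, (x.1 i - y.1 i) ^ 2) + ∑ i, (x.2 i - y.2 i) ^ 2) :=
      P51.add_sqrt_le _ _ (Finset.sum_nonneg fun i _ => sq_nonneg _)
        (Finset.sum_nonneg fun i _ => sq_nonneg _)
    calc Real.sqrt ((∑ i, ((F x).1 i - (F y).1 i) ^ 2)
          + ∑ i, ((F x).2 i - (F y).2 i) ^ 2)
        ≤ Real.sqrt (∑ i, ((F x).1 i - (F y).1 i) ^ 2)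
            + Real.sqrt (∑ i, ((F x).2 i - (F y).2 i) ^ 2) :=
          P51.sqrt_add_le _ _ (Finset.sum_nonneg fun i _ => sq_nonneg _)
            (Finset.sum_nonneg fun i _ => sq_nonneg _)
      _ ≤ ((1 + 1 / (2 * lam)) * ((n : ℝ) * S / (1 - β) ^ 2) * a1 + κ * (a1 + a2))
            + ((1 + 1 / (2 * lam)) * ((n : ℝ) * S / (1 - β) ^ 2) * a2 + κ * (a1 + a2)) :=
          add_le_add ht1 ht2
      _ = ((1 + 1 / (2 * lam)) * ((n : ℝ) * S / (1 - β) ^ 2) + 2 * κ) * (a1 + a2) := by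
          ring
      _ ≤ ((1 + 1 / (2 * lam)) * ((n : ℝ) * S / (1 - β) ^ 2) + 2 * κ)
            * (Real.sqrt 2 * Real.sqrt ((∑ i, (x.1 i - y.1 i) ^ 2)
              + ∑ i, (x.2 i - y.2 i) ^ 2)) :=
          mul_le_mul_of_nonneg_left hsum12 (by positivity)
      _ = ((Real.sqrt 2 + Real.sqrt 2 / (2 * lam)) * ((n : ℝ) * S / (1 - β) ^ 2)
            + 2 * Real.sqrt 2 * κ)
          * Real.sqrt ((∑ i, (x.1 i - y.1 i) ^ 2) + ∑ i, (x.2 i - y.2 i) ^ 2) := by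
          ring
end
end
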